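/- arXiv:math/0004021 — 9 statements merged into one kernel-verified Lean document; each statement's English description precedes it below -/
import Mathlib

section
/- Let G be a group normally generated by elements x_1, ..., x_n, and let MG be the quotient of G by the normal closure of all commutators [x_i, x_i^y] for 1 ≤ i ≤ n and y ∈ G (the Milnor group of G). Then MG is nilpotent of class at most n, i.e. the (n+1)-st term of its lower central series is trivial. -/
/-- The subgroup of relators defining the Milnor group: the normal closure of all
commutators `[xᵢ, xᵢ^y] = xᵢ⁻¹ (y⁻¹ xᵢ y)⁻¹ xᵢ (y⁻¹ xᵢ y)` for `y ∈ G`. -/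
def milnorRelators {G : Type*} [Group G] {n : ℕ} (x : Fin n → G) : Subgroup G :=
  Subgroup.normalClosure
    {g : G | ∃ (i : Fin n) (y : G),
      g = (x i)⁻¹ * (y⁻¹ * x i * y)⁻¹ * x i * (y⁻¹ * x i * y)}

instance {G : Type*} [Group G] {n : ℕ} (x : Fin n → G) : (milnorRelators x).Normal :=
  Subgroup.normalClosure_normal

/-- The centralizer of (the carrier of) a normal subgroup is normal. -/
theorem centralizer_normal_of_normal {Q : Type*} [Group Q] (N : Subgroup Q) [hN : N.Normal] :
    (Subgroup.centralizer (N : Set Q)).Normal := by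
  constructor
  intro g hg y
  rw [Subgroup.mem_centralizer_iff] at hg ⊢
  intro h hh
  have h1 : y⁻¹ * h * y ∈ N := by
    have := hN.conj_mem h hh y⁻¹
    simpa using this
  have h2 := hg _ h1
  have h3 : y * ((y⁻¹ * h * y) * g) * y⁻¹ = y * (g * (y⁻¹ * h * y)) * y⁻¹ := by rw [h2]
  calc h * (y * g * y⁻¹) = y * ((y⁻¹ * h * y) * g) * y⁻¹ := by group
    _ = y * (g * (y⁻¹ * h * y)) * y⁻¹ := h3
    _ = y * g * y⁻¹ * h := by group

/-- Key lemma (Milnor): if `Q` is normally generated by `s₁, …, sₙ` and each `sᵢ`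
commutes with all of its conjugates, then `Q` is nilpotent of class at most `n`. -/
theorem milnor_key (n : ℕ) : ∀ (Q : Type*) [Group Q] (s : Fin n → Q),
    Subgroup.normalClosure (Set.range s) = ⊤ →
    (∀ (i : Fin n) (y : Q), s i * (y⁻¹ * s i * y) = (y⁻¹ * s i * y) * s i) →
    Subgroup.lowerCentralSeries (⊤ : Subgroup Q) n = ⊥ := by
  induction n with
  | zero =>
    intro Q _ s hgen _
    have h0 : Subgroup.normalClosure (Set.range s) ≤ ⊥ :=
      Subgroup.normalClosure_le_normal (by rw [Set.range_eq_empty s]; exact Set.empty_subset _)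
    rw [Subgroup.lowerCentralSeries_zero]
    exact le_antisymm (hgen ▸ h0) bot_le
  | succ n ih =>
    intro Q _ s hgen hrel
    -- the normal closures of the individual generators
    set N : Fin (n + 1) → Subgroup Q := fun i => Subgroup.normalClosure {s i} with hN
    haveI hNnormal : ∀ i, (N i).Normal := fun i => Subgroup.normalClosure_normal
    -- each `s i` centralizes `N i`
    have hscomm : ∀ i : Fin (n + 1), ∀ a ∈ N i, a * s i = s i * a := by
      intro i a ha
      have hsub : N i ≤ Subgroup.centralizer {s i} := by
        apply (Subgroup.closure_le _).2
        intro b hb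
        rcases Group.mem_conjugatesOfSet_iff.1 hb with ⟨c, hc, hconj⟩
        rcases Set.mem_singleton_iff.1 hc
        rcases isConj_iff.1 hconj with ⟨u, hu⟩
        rw [SetLike.mem_coe, Subgroup.mem_centralizer_iff]
        intro h hh
        rcases Set.mem_singleton_iff.1 hh
        have := hrel i u⁻¹
        rw [inv_inv] at this
        rw [← hu]
        exact this
      have := hsub ha
      rw [Subgroup.mem_centralizer_iff] at this
      exact (this (s i) rfl).symm
    -- each `N i` is abelian
    have hNab : ∀ i : Fin (n + 1), ∀ a ∈ N i, ∀ b ∈ N i, a * b = b * a := by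
      intro i a ha b hb
      haveI := centralizer_normal_of_normal (N i)
      have hsub : N i ≤ Subgroup.centralizer ((N i : Set Q)) := by
        apply Subgroup.normalClosure_le_normal
        intro c hc
        rcases Set.mem_singleton_iff.1 hc
        rw [SetLike.mem_coe, Subgroup.mem_centralizer_iff]
        intro h hh
        exact hscomm i h hh
      have := hsub ha
      rw [Subgroup.mem_centralizer_iff] at this
      exact (this b hb).symm
    -- the lower central series term `n` is contained in every `N i`
    have hlcs : ∀ i : Fin (n + 1), Subgroup.lowerCentralSeries (⊤ : Subgroup Q) n ≤ N i := by
      intro i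
      set π : Q →* Q ⧸ N i := QuotientGroup.mk' (N i) with hπ
      have hπsurj : Function.Surjective π := QuotientGroup.mk'_surjective (N i)
      set s' : Fin n → Q ⧸ N i := fun k => π (s (i.succAbove k)) with hs'
      have hgen' : Subgroup.normalClosure (Set.range s') = ⊤ := by
        have h1 : Subgroup.map π (Subgroup.normalClosure (Set.range s)) = ⊤ := by
          rw [hgen]; exact Subgroup.map_top_of_surjective π hπsurj
        rw [Subgroup.map_normalClosure _ _ hπsurj] at h1
        have h2 : Subgroup.normalClosure (π '' Set.range s) ≤
            Subgroup.normalClosure (Set.range s') := by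
          apply Subgroup.normalClosure_le_normal
          rintro _ ⟨_, ⟨j, rfl⟩, rfl⟩
          by_cases hij : j = i
          · subst hij
            have : π (s j) = 1 := (QuotientGroup.eq_one_iff _).2
              (Subgroup.subset_normalClosure rfl)
            rw [this]; exact Subgroup.one_mem _
          · rcases Fin.exists_succAbove_eq hij with ⟨k, hk⟩
            exact Subgroup.subset_normalClosure ⟨k, congrArg (fun t => π (s t)) hk⟩
        exact le_antisymm le_top (h1 ▸ h2)
      have hrel' : ∀ (k : Fin n) (y : Q ⧸ N i),
          s' k * (y⁻¹ * s' k * y) = (y⁻¹ * s' k * y) * s' k := by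
        intro k y
        rcases hπsurj y with ⟨z, rfl⟩
        have := hrel (i.succAbove k) z
        calc s' k * ((π z)⁻¹ * s' k * π z)
            = π (s (i.succAbove k) * (z⁻¹ * s (i.succAbove k) * z)) := by
              simp [hs', map_mul, map_inv]
          _ = π ((z⁻¹ * s (i.succAbove k) * z) * s (i.succAbove k)) := by rw [this]
          _ = ((π z)⁻¹ * s' k * π z) * s' k := by simp [hs', map_mul, map_inv]
      have hbot : Subgroup.lowerCentralSeries (⊤ : Subgroup (Q ⧸ N i)) n = ⊥ := ih _ s' hgen' hrel'
      intro g hg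
      have : π g ∈ Subgroup.lowerCentralSeries (⊤ : Subgroup (Q ⧸ N i)) n :=
        lowerCentralSeries.map π n ⟨g, hg, rfl⟩
      rw [hbot, Subgroup.mem_bot] at this
      have : g ∈ MonoidHom.ker π := this
      rwa [hπ, QuotientGroup.ker_mk'] at this
    -- therefore the `n`-th term is central
    apply lowerCentralSeries_succ_eq_bot
    intro g hg
    rw [Subgroup.mem_center_iff]
    intro h
    haveI := centralizer_normal_of_normal (Subgroup.lowerCentralSeries (⊤ : Subgroup Q) n)
    have htop : (⊤ : Subgroup Q) ≤
        Subgroup.centralizer ((Subgroup.lowerCentralSeries (⊤ : Subgroup Q) n : Set Q)) := by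
      nth_rewrite 1 [← hgen]
      apply Subgroup.normalClosure_le_normal
      rintro _ ⟨i, rfl⟩
      rw [SetLike.mem_coe, Subgroup.mem_centralizer_iff]
      intro a ha
      exact hscomm i a (hlcs i ha)
    have := htop (Subgroup.mem_top h)
    rw [Subgroup.mem_centralizer_iff] at this
    exact (this g hg).symm

/-- If `G` is normally generated by `x₁, …, xₙ`, then the Milnor group
`MG = G/⟪[xᵢ, xᵢ^y]⟫` is nilpotent of class at most `n`, i.e. the `(n+1)`-st term
of its lower central series (`G₁ = G`, `G_{k+1} = [G, G_k]`) is trivial. -/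
theorem milnorGroup_nilpotent {G : Type*} [Group G] {n : ℕ} (x : Fin n → G)
    (hgen : Subgroup.normalClosure (Set.range x) = ⊤) :
    Subgroup.lowerCentralSeries (⊤ : Subgroup (G ⧸ milnorRelators x)) n = ⊥ := by
  set π : G →* G ⧸ milnorRelators x := QuotientGroup.mk' (milnorRelators x) with hπ
  have hπsurj : Function.Surjective π := QuotientGroup.mk'_surjective _
  apply milnor_key n (G ⧸ milnorRelators x) (fun i => π (x i))
  · have h1 : Subgroup.map π (Subgroup.normalClosure (Set.range x)) = ⊤ := by
      rw [hgen]; exact Subgroup.map_top_of_surjective π hπsurj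
    rw [Subgroup.map_normalClosure _ _ hπsurj] at h1
    rw [← Set.range_comp] at h1
    exact h1
  · intro i y
    rcases hπsurj y with ⟨z, rfl⟩
    have hr : (x i)⁻¹ * (z⁻¹ * x i * z)⁻¹ * x i * (z⁻¹ * x i * z) ∈ milnorRelators x :=
      Subgroup.subset_normalClosure ⟨i, z, rfl⟩
    have h1 : π ((x i)⁻¹ * (z⁻¹ * x i * z)⁻¹ * x i * (z⁻¹ * x i * z)) = 1 :=
      (QuotientGroup.eq_one_iff _).2 hr
    set a := π (x i)
    set c := (π z)⁻¹ * a * π z with hc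
    have h2 : a⁻¹ * c⁻¹ * a * c = 1 := by
      rw [hc]
      simpa [map_mul, map_inv, mul_assoc] using h1
    calc a * c = c * a * (a⁻¹ * c⁻¹ * a * c) := by group
      _ = c * a := by rw [h2, mul_one]
end

section
/- Let G be a group normally generated by a single element x. Then the Milnor group MG (the quotient of G by the normal closure of all [x, x^y], y ∈ G) is abelian. -/
/-- If `G` is normally generated by a single element `x`, then the Milnor group
`MG = G/⟪[x, x^y] : y ∈ G⟫` (with `x^y = y⁻¹xy` and `[a,b] = a⁻¹b⁻¹ab`) is abelian. -/
theorem milnorGroup_of_one_normal_generator_abelian {G : Type*} [Group G] (x : G)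
    (hgen : Subgroup.normalClosure {x} = ⊤) :
    ∀ a b : G ⧸ Subgroup.normalClosure
        {g : G | ∃ y : G, g = x⁻¹ * (y⁻¹ * x * y)⁻¹ * x * (y⁻¹ * x * y)},
      a * b = b * a := by
  set N := Subgroup.normalClosure
      {g : G | ∃ y : G, g = x⁻¹ * (y⁻¹ * x * y)⁻¹ * x * (y⁻¹ * x * y)} with hN
  set mk : G →* G ⧸ N := QuotientGroup.mk' N with hmk
  have basic : ∀ w : G, Commute (mk x) (mk (w⁻¹ * x * w)) := by
    intro w
    have h : x⁻¹ * (w⁻¹ * x * w)⁻¹ * x * (w⁻¹ * x * w) ∈ N :=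
      Subgroup.subset_normalClosure ⟨w, rfl⟩
    have h1 : (mk x)⁻¹ * (mk (w⁻¹ * x * w))⁻¹ * mk x * mk (w⁻¹ * x * w) = 1 := by
      have := (QuotientGroup.eq_one_iff _).mpr h
      rw [← map_inv, ← map_inv, ← map_mul, ← map_mul, ← map_mul]; exact this
    have hc : Commute (mk x)⁻¹ (mk (w⁻¹ * x * w))⁻¹ := by
      refine commutatorElement_eq_one_iff_commute.mp ?_
      rw [commutatorElement_def, inv_inv, inv_inv]
      exact h1
    exact Commute.inv_inv_iff.mp hc
  have mem_conj : ∀ a ∈ Group.conjugatesOfSet ({x} : Set G),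
      ∃ c : G, a = c⁻¹ * x * c := by
    intro a ha
    rcases Group.mem_conjugatesOfSet_iff.mp ha with ⟨b, hb, hconj⟩
    rcases hconj with ⟨c, hc⟩
    rcases hb with rfl
    exact ⟨c⁻¹, by rw [inv_inv]; rw [SemiconjBy] at hc; group; rw [hc]; group⟩
  have central : ∀ g : G, Commute (mk x) (mk g) := by
    intro g
    have hg : g ∈ Subgroup.closure (Group.conjugatesOfSet ({x} : Set G)) := by
      show g ∈ Subgroup.normalClosure {x}
      rw [hgen]; trivial
    induction hg using Subgroup.closure_induction with
    | mem a ha =>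
        rcases mem_conj a ha with ⟨c, rfl⟩
        exact basic c
    | one => simp
    | mul a b _ _ h1 h2 => simpa [map_mul] using h1.mul_right h2
    | inv a _ h1 => simpa [map_inv] using h1.inv_right
  have pow : ∀ g : G, ∃ n : ℤ, mk g = (mk x) ^ n := by
    intro g
    have hg : g ∈ Subgroup.closure (Group.conjugatesOfSet ({x} : Set G)) := by
      show g ∈ Subgroup.normalClosure {x}
      rw [hgen]; trivial
    induction hg using Subgroup.closure_induction with
    | mem a ha =>
        rcases mem_conj a ha with ⟨c, rfl⟩
        refine ⟨1, ?_⟩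
        have h1 : mk c * mk x = mk x * mk c := ((central c).symm).eq
        simp only [map_mul, map_inv, zpow_one]
        rw [mul_assoc, ← h1]
        group
    | one => exact ⟨0, by simp⟩
    | mul a b _ _ h1 h2 =>
        rcases h1 with ⟨m, hm⟩
        rcases h2 with ⟨n, hn⟩
        exact ⟨m + n, by rw [map_mul, hm, hn, zpow_add]⟩
    | inv a _ h1 =>
        rcases h1 with ⟨m, hm⟩
        exact ⟨-m, by rw [map_inv, hm, zpow_neg]⟩
  intro a b
  rcases QuotientGroup.mk'_surjective N a with ⟨g, rfl⟩
  rcases QuotientGroup.mk'_surjective N b with ⟨h, rfl⟩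
  rcases pow g with ⟨m, hm⟩
  rcases pow h with ⟨n, hn⟩
  show mk g * mk h = mk h * mk g
  rw [hm, hn, ← zpow_add, ← zpow_add, add_comm]
end

section
/- Every finitely generated nilpotent group is finitely presented. -/
/-- A group is finitely presented if it is isomorphic to the quotient of a finitely
generated free group by the normal closure of a finite set of relators. -/
def IsFinitelyPresented (G : Type*) [Group G] : Prop :=
  ∃ (m : ℕ) (S : Finset (FreeGroup (Fin m))),
    Nonempty (G ≃* FreeGroup (Fin m) ⧸
      Subgroup.normalClosure (S : Set (FreeGroup (Fin m))))


universe u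

open Subgroup Function
open scoped commutatorElement

instance centerCommGroupPort (G : Type*) [Group G] : CommGroup (Subgroup.center G) :=
  { (inferInstance : Group (Subgroup.center G)) with
    mul_comm := fun a b => Subtype.ext ((Subgroup.mem_center_iff.mp b.2) a) }


lemma map_normalClosure_le {G H : Type*} [Group G] [Group H] (f : G →* H) (s : Set G) :
    (Subgroup.normalClosure s).map f ≤ Subgroup.normalClosure (f '' s) := by
  rw [Subgroup.map_le_iff_le_comap]
  haveI : ((Subgroup.normalClosure (f '' s)).comap f).Normal :=
    Subgroup.Normal.comap inferInstance f
  exact Subgroup.normalClosure_le_normal fun x hx =>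
    Subgroup.subset_normalClosure (Set.mem_image_of_mem f hx)

/-- If there is a surjection from a finitely generated free group whose kernel is the
normal closure of a finite set, the group is finitely presented. -/
lemma isFinitelyPresented_of_ker {G : Type*} [Group G] {ι : Type} [Fintype ι]
    (f : FreeGroup ι →* G) (hf : Surjective f) (T : Set (FreeGroup ι)) (hT : T.Finite)
    (hker : f.ker = Subgroup.normalClosure T) : IsFinitelyPresented G := by
  classical
  let e := Fintype.equivFin ι
  let c := FreeGroup.freeGroupCongr e
  have hfinT : (⇑c '' T).Finite := hT.image _
  refine ⟨Fintype.card ι, hfinT.toFinset, ⟨?_⟩⟩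
  have hcoe : Subgroup.normalClosure (↑hfinT.toFinset : Set (FreeGroup (Fin (Fintype.card ι))))
      = Subgroup.normalClosure (⇑c '' T) := by rw [Set.Finite.coe_toFinset]
  have e1 : FreeGroup ι ⧸ Subgroup.normalClosure T ≃* G :=
    (QuotientGroup.quotientMulEquivOfEq hker.symm).trans
      (QuotientGroup.quotientKerEquivOfSurjective f hf)
  have e2 : FreeGroup ι ⧸ Subgroup.normalClosure T ≃*
      FreeGroup (Fin (Fintype.card ι)) ⧸ Subgroup.normalClosure (⇑c '' T) :=
    QuotientGroup.congr _ _ (c : FreeGroup ι ≃* FreeGroup (Fin (Fintype.card ι)))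
      (Subgroup.map_normalClosure T c.toMonoidHom c.surjective)
  exact (e1.symm.trans e2).trans (QuotientGroup.quotientMulEquivOfEq hcoe.symm)

/-- Any surjection from a free group on finitely many generators onto a finitely
presented group has kernel which is the normal closure of a finite set. -/
lemma exists_finite_ncl_ker {Q : Type*} [Group Q] {ι : Type*} [Finite ι]
    (β : FreeGroup ι →* Q) (hβ : Surjective β)
    (m : ℕ) (S : Finset (FreeGroup (Fin m)))
    (eQ : Q ≃* FreeGroup (Fin m) ⧸ Subgroup.normalClosure (S : Set (FreeGroup (Fin m)))) :
    ∃ T : Set (FreeGroup ι), T.Finite ∧ β.ker = Subgroup.normalClosure T := by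
  classical
  set α : FreeGroup (Fin m) →* Q :=
    (eQ.symm.toMonoidHom).comp (QuotientGroup.mk' _) with hα_def
  have hα : Surjective α := eQ.symm.surjective.comp (QuotientGroup.mk'_surjective _)
  have hkerα : α.ker = Subgroup.normalClosure (S : Set (FreeGroup (Fin m))) := by
    have : α.ker = (QuotientGroup.mk' (Subgroup.normalClosure
        (S : Set (FreeGroup (Fin m))))).ker := by
      ext x
      simp [hα_def, MonoidHom.mem_ker]
    rw [this, QuotientGroup.ker_mk']
  -- lifts
  choose u hu using fun i : Fin m => hβ (α (FreeGroup.of i))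
  choose v hv using fun j : ι => hα (β (FreeGroup.of j))
  set θ : FreeGroup (Fin m) →* FreeGroup ι := FreeGroup.lift u with hθ_def
  set ρ : FreeGroup ι →* FreeGroup (Fin m) := FreeGroup.lift v with hρ_def
  have hβθ : ∀ x, β (θ x) = α x := by
    intro x
    have : β.comp θ = α := FreeGroup.ext_hom _ _ fun i => by simp [hθ_def, hu]
    exact DFunLike.congr_fun this x
  have hαρ : ∀ x, α (ρ x) = β x := by
    intro x
    have : α.comp ρ = β := FreeGroup.ext_hom _ _ fun j => by simp [hρ_def, hv]
    exact DFunLike.congr_fun this x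
  refine ⟨(⇑θ '' S) ∪ Set.range (fun j : ι => FreeGroup.of j * (θ (ρ (FreeGroup.of j)))⁻¹),
    (S.finite_toSet.image _).union (Set.finite_range _), ?_⟩
  set T : Set (FreeGroup ι) :=
    (⇑θ '' S) ∪ Set.range (fun j : ι => FreeGroup.of j * (θ (ρ (FreeGroup.of j)))⁻¹) with hT_def
  have hTker : T ⊆ (β.ker : Set (FreeGroup ι)) := by
    rintro x (⟨s, hs, rfl⟩ | ⟨j, rfl⟩)
    · have : s ∈ α.ker := hkerα ▸ Subgroup.subset_normalClosure hs
      simpa [MonoidHom.mem_ker, hβθ] using this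
    · simp [MonoidHom.mem_ker, hβθ, hαρ]
  have hle : Subgroup.normalClosure T ≤ β.ker := Subgroup.normalClosure_le_normal hTker
  have key : ∀ w : FreeGroup ι, w⁻¹ * θ (ρ w) ∈ Subgroup.normalClosure T := by
    intro w
    induction w with
    | C1 => simpa using one_mem (Subgroup.normalClosure T)
    | of j =>
        show (FreeGroup.of j)⁻¹ * θ (ρ (FreeGroup.of j)) ∈ Subgroup.normalClosure T
        have ht : FreeGroup.of j * (θ (ρ (FreeGroup.of j)))⁻¹ ∈ Subgroup.normalClosure T :=
          Subgroup.subset_normalClosure (Or.inr ⟨j, rfl⟩)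
        have : (FreeGroup.of j)⁻¹ * θ (ρ (FreeGroup.of j)) =
            (FreeGroup.of j)⁻¹ * (FreeGroup.of j * (θ (ρ (FreeGroup.of j)))⁻¹)⁻¹ *
              ((FreeGroup.of j)⁻¹)⁻¹ := by group
        rw [this]
        exact Subgroup.Normal.conj_mem inferInstance _ (inv_mem ht) _
    | inv_of j ih =>
        show ((FreeGroup.of j)⁻¹)⁻¹ * θ (ρ (FreeGroup.of j)⁻¹) ∈ Subgroup.normalClosure T
        replace ih : (FreeGroup.of j)⁻¹ * θ (ρ (FreeGroup.of j)) ∈ Subgroup.normalClosure T := ih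
        have : ((FreeGroup.of j)⁻¹)⁻¹ * θ (ρ (FreeGroup.of j)⁻¹) =
            FreeGroup.of j * ((FreeGroup.of j)⁻¹ * θ (ρ (FreeGroup.of j)))⁻¹ *
              (FreeGroup.of j)⁻¹ := by
          rw [map_inv, map_inv]; group
        rw [this]
        exact Subgroup.Normal.conj_mem inferInstance _ (inv_mem ih) _
    | mul x y ihx ihy =>
        have : (x * y)⁻¹ * θ (ρ (x * y)) =
            (y⁻¹ * (x⁻¹ * θ (ρ x)) * (y⁻¹)⁻¹) * (y⁻¹ * θ (ρ y)) := by
          rw [map_mul, map_mul]; group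
        rw [this]
        exact mul_mem (Subgroup.Normal.conj_mem inferInstance _ ihx _) ihy
  refine le_antisymm ?_ hle
  intro w hw
  have hρw : ρ w ∈ α.ker := by
    rw [MonoidHom.mem_ker, hαρ]; exact hw
  have hθρw : θ (ρ w) ∈ Subgroup.normalClosure T := by
    have h1 : θ (ρ w) ∈ (α.ker).map θ := Subgroup.mem_map_of_mem _ hρw
    have h2 : (α.ker).map θ ≤ Subgroup.normalClosure T := by
      rw [hkerα]
      refine le_trans (_root_.map_normalClosure_le θ _) (Subgroup.normalClosure_mono ?_)
      exact Set.subset_union_left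
    exact h2 h1
  have : w = θ (ρ w) * (w⁻¹ * θ (ρ w))⁻¹ := by group
  rw [this]
  exact mul_mem hθρw (inv_mem (key w))
section ZProd

/-- The homomorphism sending an exponent vector to the corresponding product of powers. -/
def zprod {n : ℕ} {H : Type*} [CommGroup H] (c : Fin n → H) :
    Multiplicative (Fin n → ℤ) →* H where
  toFun e := ∏ j, c j ^ (Multiplicative.toAdd e j)
  map_one' := by simp
  map_mul' a b := by
    simp only [toAdd_mul, Pi.add_apply, zpow_add, Finset.prod_mul_distrib]

lemma zprod_ofAdd {n : ℕ} {H : Type*} [CommGroup H] (c : Fin n → H) (e : Fin n → ℤ) :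
    zprod c (Multiplicative.ofAdd e) = ((List.finRange n).map (fun j => c j ^ (e j))).prod := by
  show (∏ j, c j ^ (e j)) = _
  rw [Fin.prod_univ_def]

lemma zprod_single {n : ℕ} {H : Type*} [CommGroup H] (c : Fin n → H) (j : Fin n) :
    zprod c (Multiplicative.ofAdd (Pi.single j (1 : ℤ))) = c j := by
  rw [zprod_ofAdd, ← Fin.prod_univ_def,
    Fintype.prod_eq_single j (fun i hi => by rw [Pi.single_eq_of_ne hi, zpow_zero]),
    Pi.single_eq_same, zpow_one]

lemma map_word {ι : Type*} {H : Type*} [Group H] (f : FreeGroup ι →* H) {n : ℕ}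
    (y : Fin n → ι) (e : Fin n → ℤ) :
    f (((List.finRange n).map (fun j => FreeGroup.of (y j) ^ (e j))).prod)
      = ((List.finRange n).map (fun j => f (FreeGroup.of (y j)) ^ (e j))).prod := by
  rw [map_list_prod, List.map_map]
  have h : ⇑f ∘ (fun j => FreeGroup.of (y j) ^ (e j)) = fun j => f (FreeGroup.of (y j)) ^ (e j) := by
    funext j
    simp [Function.comp_def, map_zpow]
  rw [h]

end ZProd

/-- A finitely generated group which is a central extension of a finitely presented
group is finitely presented. -/
lemma central_extension_fp {G : Type*} [Group G] (hfg : Group.FG G)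
    (hQ : IsFinitelyPresented (G ⧸ Subgroup.center G)) : IsFinitelyPresented G := by
  classical
  obtain ⟨Sg, hSgtop, hSgfin⟩ := Group.fg_iff.mp hfg
  obtain ⟨k, g, -, hgrange⟩ := hSgfin.fin_param
  obtain ⟨m, SQ, ⟨eQ⟩⟩ := hQ
  set φ := QuotientGroup.mk' (Subgroup.center G) with hφ_def
  set β₀ : FreeGroup (Fin k) →* G := FreeGroup.lift g with hβ₀_def
  have hβ₀ : Function.Surjective β₀ := by
    rw [← MonoidHom.range_eq_top, hβ₀_def, FreeGroup.range_lift_eq_closure,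
      hgrange, hSgtop]
  obtain ⟨T₀, hT₀fin, hT₀⟩ := exists_finite_ncl_ker (φ.comp β₀)
    ((QuotientGroup.mk'_surjective _).comp hβ₀) m SQ eQ
  have hker_comp : ∀ (β' : FreeGroup (Fin k) →* G) (x), x ∈ (φ.comp β').ker ↔
      β' x ∈ Subgroup.center G := by
    intro β' x
    rw [MonoidHom.mem_ker, MonoidHom.comp_apply, hφ_def, ← QuotientGroup.eq_one_iff (β' x)]
    rfl
  have hZmap : Subgroup.map β₀ ((φ.comp β₀).ker) = Subgroup.center G := by
    have : (φ.comp β₀).ker = Subgroup.comap β₀ (Subgroup.center G) := by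
      ext x; rw [hker_comp β₀ x]; rfl
    rw [this, Subgroup.map_comap_eq_self_of_surjective hβ₀]
  have hcentralT₀ : (⇑β₀ '' T₀ : Set G) ⊆ Subgroup.center G := by
    rintro x ⟨t, ht, rfl⟩
    exact (hker_comp β₀ t).mp (hT₀ ▸ Subgroup.subset_normalClosure ht)
  have hZ : Subgroup.closure (⇑β₀ '' T₀) = Subgroup.center G := by
    haveI hnorm : (Subgroup.closure (⇑β₀ '' T₀)).Normal := by
      constructor
      intro x hx gg
      have hxc : x ∈ Subgroup.center G :=
        (Subgroup.closure_le _).mpr hcentralT₀ hx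
      rw [Subgroup.mem_center_iff.mp hxc gg, mul_inv_cancel_right]
      exact hx
    have h3 : Subgroup.normalClosure (⇑β₀ '' T₀) = Subgroup.closure (⇑β₀ '' T₀) :=
      le_antisymm (Subgroup.normalClosure_le_normal Subgroup.subset_closure)
        Subgroup.closure_le_normalClosure
    rw [← h3, ← Subgroup.map_normalClosure T₀ β₀ hβ₀, ← hT₀, hZmap]
  obtain ⟨n, z, -, hz⟩ := (hT₀fin.image ⇑β₀).fin_param
  have hzc : ∀ j, z j ∈ Subgroup.center G := fun j => by
    have : z j ∈ Subgroup.closure (⇑β₀ '' T₀) :=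
      Subgroup.subset_closure (hz ▸ Set.mem_range_self j)
    rwa [hZ] at this
  -- the combined generating map
  set gen : Fin k ⊕ Fin n → G := Sum.elim g z with hgen_def
  set β : FreeGroup (Fin k ⊕ Fin n) →* G := FreeGroup.lift gen with hβ_def
  have hβof : ∀ s, β (FreeGroup.of s) = gen s := fun s => FreeGroup.lift_apply_of
  have hβ : Function.Surjective β := by
    rw [← MonoidHom.range_eq_top, hβ_def, FreeGroup.range_lift_eq_closure,
      hgen_def, Set.Sum.elim_range]
    rw [eq_top_iff, ← hSgtop, ← hgrange]
    exact Subgroup.closure_mono Set.subset_union_left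
  obtain ⟨T, hTfin, hT⟩ := exists_finite_ncl_ker (φ.comp β)
    ((QuotientGroup.mk'_surjective _).comp hβ) m SQ eQ
  -- ζ : exponent vectors to central elements of G
  set z' : Fin n → Subgroup.center G := fun j => ⟨z j, hzc j⟩ with hz'_def
  set ζ : Multiplicative (Fin n → ℤ) →* G :=
    (Subgroup.center G).subtype.comp (zprod z') with hζ_def
  set yw : (Fin n → ℤ) → FreeGroup (Fin k ⊕ Fin n) :=
    fun e => ((List.finRange n).map
      (fun j => FreeGroup.of ((Sum.inr j : Fin k ⊕ Fin n)) ^ (e j))).prod with hyw_def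
  have hζ_eq : ∀ e, ζ (Multiplicative.ofAdd e)
      = ((List.finRange n).map (fun j => z j ^ (e j))).prod := by
    intro e
    rw [hζ_def, MonoidHom.comp_apply, zprod_ofAdd, map_list_prod, List.map_map]
    have h : ⇑(Subgroup.center G).subtype ∘ (fun j => z' j ^ (e j))
        = fun j => z j ^ (e j) := by
      funext j
      simp [Function.comp_def, hz'_def]
    rw [h]
  have hβyw : ∀ e, β (yw e) = ζ (Multiplicative.ofAdd e) := by
    intro e
    rw [hyw_def, map_word, hζ_eq]
    have h : (fun j => β (FreeGroup.of ((Sum.inr j : Fin k ⊕ Fin n))) ^ (e j))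
        = fun j => z j ^ (e j) := by
      funext j
      rw [hβof]
      simp [hgen_def]
    rw [h]
  have hζsingle : ∀ j, ζ (Multiplicative.ofAdd (Pi.single j (1 : ℤ))) = z j := by
    intro j
    rw [hζ_def, MonoidHom.comp_apply, zprod_single]
    rfl
  -- the relation module
  set E : AddSubgroup (Fin n → ℤ) :=
    { carrier := {e | ζ (Multiplicative.ofAdd e) = 1}
      zero_mem' := by simp
      add_mem' := fun {u v} hu hv => by
        have : ζ (Multiplicative.ofAdd (u + v))
            = ζ (Multiplicative.ofAdd u) * ζ (Multiplicative.ofAdd v) := by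
          rw [← map_mul]; rfl
        simp only [Set.mem_setOf_eq] at hu hv ⊢
        rw [this, hu, hv, mul_one]
      neg_mem' := fun {u} hu => by
        have : ζ (Multiplicative.ofAdd (-u)) = (ζ (Multiplicative.ofAdd u))⁻¹ := by
          rw [← map_inv]; rfl
        simp only [Set.mem_setOf_eq] at hu ⊢
        rw [this, hu, inv_one] } with hE_def
  obtain ⟨Bf, hBf⟩ := IsNoetherian.noetherian (AddSubgroup.toIntSubmodule E)
  have hBcl : AddSubgroup.closure (↑Bf : Set (Fin n → ℤ)) = E := by
    have h := congrArg Submodule.toAddSubgroup hBf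
    rwa [Submodule.span_int_eq_addSubgroupClosure,
      AddSubgroup.toIntSubmodule_toAddSubgroup] at h
  have hBE : ∀ b ∈ (Bf : Set (Fin n → ℤ)), ζ (Multiplicative.ofAdd b) = 1 := by
    intro b hb
    have : b ∈ E := hBcl ▸ AddSubgroup.subset_closure hb
    exact this
  have hker_comp2 : ∀ (x : FreeGroup (Fin k ⊕ Fin n)), x ∈ (φ.comp β).ker ↔
      β x ∈ Subgroup.center G := by
    intro x
    rw [MonoidHom.mem_ker, MonoidHom.comp_apply, hφ_def, ← QuotientGroup.eq_one_iff (β x)]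
    rfl
  have hβT : ∀ t ∈ T, β t ∈ Subgroup.center G := by
    intro t ht
    refine (hker_comp2 t).mp ?_
    have h := Subgroup.subset_normalClosure (s := T) ht
    rwa [← hT] at h
  -- ζ hits all of the center
  have hζsurj : ∀ x ∈ Subgroup.center G, ∃ e : Fin n → ℤ, ζ (Multiplicative.ofAdd e) = x := by
    intro x hx
    rw [← hZ, ← hz] at hx
    refine Subgroup.closure_induction
      (p := fun x _ => ∃ e : Fin n → ℤ, ζ (Multiplicative.ofAdd e) = x) ?_ ?_ ?_ ?_ hx
    · rintro x ⟨j, rfl⟩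
      exact ⟨Pi.single j 1, hζsingle j⟩
    · exact ⟨0, by simp⟩
    · rintro u v _ _ ⟨e₁, he₁⟩ ⟨e₂, he₂⟩
      refine ⟨e₁ + e₂, ?_⟩
      have : ζ (Multiplicative.ofAdd (e₁ + e₂))
          = ζ (Multiplicative.ofAdd e₁) * ζ (Multiplicative.ofAdd e₂) := by
        rw [← map_mul]; rfl
      rw [this, he₁, he₂]
    · rintro u _ ⟨e, he⟩
      refine ⟨-e, ?_⟩
      have : ζ (Multiplicative.ofAdd (-e)) = (ζ (Multiplicative.ofAdd e))⁻¹ := by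
        rw [← map_inv]; rfl
      rw [this, he]
  -- choose exponent vectors for the elements of T
  have hach : ∀ t : FreeGroup (Fin k ⊕ Fin n), ∃ e : Fin n → ℤ,
      t ∈ T → β t = ζ (Multiplicative.ofAdd e) := by
    intro t
    by_cases ht : t ∈ T
    · obtain ⟨e, he⟩ := hζsurj (β t) (hβT t ht)
      exact ⟨e, fun _ => he.symm⟩
    · exact ⟨0, fun h => absurd h ht⟩
  choose a ha using hach
  -- the relators
  set R : Set (FreeGroup (Fin k ⊕ Fin n)) :=
    ((fun t => t * (yw (a t))⁻¹) '' T ∪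
      Set.range (fun p : (Fin k ⊕ Fin n) × Fin n =>
        ⁅FreeGroup.of p.1, FreeGroup.of ((Sum.inr p.2 : Fin k ⊕ Fin n))⁆)) ∪
      yw '' (Bf : Set (Fin n → ℤ)) with hR_def
  have hRfin : R.Finite :=
    ((hTfin.image _).union (Set.finite_range _)).union (Bf.finite_toSet.image _)
  have hRker : R ⊆ (β.ker : Set (FreeGroup (Fin k ⊕ Fin n))) := by
    rintro x ((⟨t, ht, rfl⟩ | ⟨⟨i, j⟩, rfl⟩) | ⟨b, hb, rfl⟩)
    · have : β (t * (yw (a t))⁻¹) = 1 := by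
        rw [map_mul, map_inv, hβyw, ← ha t ht, mul_inv_cancel]
      exact this
    · have : β ⁅FreeGroup.of i, FreeGroup.of ((Sum.inr j : Fin k ⊕ Fin n))⁆ = 1 := by
        rw [map_commutatorElement]
        refine commutatorElement_eq_one_iff_commute.mpr ?_
        have h1 : β (FreeGroup.of ((Sum.inr j : Fin k ⊕ Fin n))) = z j := by
          rw [hβof]; simp [hgen_def]
        rw [h1]
        exact Subgroup.mem_center_iff.mp (hzc j) _
      exact this
    · have : β (yw b) = 1 := by rw [hβyw, hBE b hb]
      exact this
  have hnclR : Subgroup.normalClosure R ≤ β.ker := Subgroup.normalClosure_le_normal hRker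
  set q : FreeGroup (Fin k ⊕ Fin n) →* (FreeGroup (Fin k ⊕ Fin n) ⧸ Subgroup.normalClosure R) :=
    QuotientGroup.mk' _ with hq_def
  have hkerq : q.ker = Subgroup.normalClosure R := QuotientGroup.ker_mk' _
  set π : (FreeGroup (Fin k ⊕ Fin n) ⧸ Subgroup.normalClosure R) →* G :=
    QuotientGroup.lift _ β hnclR with hπ_def
  have hπq : ∀ x, π (q x) = β x := fun x => rfl
  -- images of the y-generators are central in the presented group
  have hycen : ∀ j : Fin n, q (FreeGroup.of ((Sum.inr j : Fin k ⊕ Fin n)))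
      ∈ Subgroup.center (FreeGroup (Fin k ⊕ Fin n) ⧸ Subgroup.normalClosure R) := by
    intro j
    rw [Subgroup.mem_center_iff]
    intro p
    obtain ⟨w, rfl⟩ := QuotientGroup.mk'_surjective _ p
    show q w * q (FreeGroup.of (Sum.inr j)) = q (FreeGroup.of (Sum.inr j)) * q w
    suffices h : Commute (q w) (q (FreeGroup.of (Sum.inr j))) from h
    induction w with
    | C1 =>
        show Commute (q 1) _
        rw [map_one]
        exact Commute.one_left _
    | of i =>
        show Commute (q (FreeGroup.of i)) _
        have h1 : q ⁅FreeGroup.of i, FreeGroup.of ((Sum.inr j : Fin k ⊕ Fin n))⁆ = 1 := by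
          have : ⁅FreeGroup.of i, FreeGroup.of ((Sum.inr j : Fin k ⊕ Fin n))⁆ ∈ q.ker := by
            rw [hkerq]
            exact Subgroup.subset_normalClosure (Or.inl (Or.inr ⟨(i, j), rfl⟩))
          rwa [MonoidHom.mem_ker] at this
        rw [map_commutatorElement] at h1
        exact commutatorElement_eq_one_iff_commute.mp h1
    | inv_of i ih =>
        show Commute (q ((FreeGroup.of i)⁻¹)) _
        rw [map_inv]
        exact Commute.inv_left ih
    | mul x y ihx ihy =>
        show Commute (q (x * y)) _
        rw [map_mul]
        exact ihx.mul_left ihy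
  -- the central product map into the presented group
  set y' : Fin n → Subgroup.center (FreeGroup (Fin k ⊕ Fin n) ⧸ Subgroup.normalClosure R) :=
    fun j => ⟨q (FreeGroup.of ((Sum.inr j : Fin k ⊕ Fin n))), hycen j⟩ with hy'_def
  set zP : Multiplicative (Fin n → ℤ) →*
      (FreeGroup (Fin k ⊕ Fin n) ⧸ Subgroup.normalClosure R) :=
    (Subgroup.center _).subtype.comp (zprod y') with hzP_def
  have hqyw : ∀ e, q (yw e) = zP (Multiplicative.ofAdd e) := by
    intro e
    rw [hyw_def, map_word, hzP_def, MonoidHom.comp_apply, zprod_ofAdd, map_list_prod,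
      List.map_map]
    have h : ⇑(Subgroup.center _).subtype ∘ (fun j => y' j ^ (e j))
        = fun j => q (FreeGroup.of ((Sum.inr j : Fin k ⊕ Fin n))) ^ (e j) := by
      funext j
      simp [Function.comp_def, hy'_def]
    rw [h]
  have hπzP : ∀ e, π (zP (Multiplicative.ofAdd e)) = ζ (Multiplicative.ofAdd e) := by
    intro e
    rw [← hqyw, hπq, hβyw]
  have hzPcen : ∀ x, zP x ∈ Subgroup.center _ := fun x => (zprod y' x).2
  have hqT : ∀ t ∈ T, q t = zP (Multiplicative.ofAdd (a t)) := by
    intro t ht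
    have h1 : q (t * (yw (a t))⁻¹) = 1 := by
      have : t * (yw (a t))⁻¹ ∈ q.ker := by
        rw [hkerq]
        exact Subgroup.subset_normalClosure (Or.inl (Or.inl ⟨t, ht, rfl⟩))
      rwa [MonoidHom.mem_ker] at this
    have h2 : q t = q (t * (yw (a t))⁻¹) * q (yw (a t)) := by
      rw [← map_mul, inv_mul_cancel_right]
    rw [h2, h1, one_mul, hqyw]
  haveI hMnormal : (MonoidHom.range zP).Normal := by
    constructor
    intro x hx gg
    obtain ⟨e, rfl⟩ := hx
    have hc := Subgroup.mem_center_iff.mp (hzPcen e) gg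
    rw [hc, mul_inv_cancel_right]
    exact ⟨e, rfl⟩
  haveI : ((MonoidHom.range zP).comap q).Normal := Subgroup.Normal.comap hMnormal q
  have hTle : (φ.comp β).ker ≤ (MonoidHom.range zP).comap q := by
    rw [hT]
    refine Subgroup.normalClosure_le_normal ?_
    intro t ht
    exact ⟨Multiplicative.ofAdd (a t), (hqT t ht).symm⟩
  have hkerβ : β.ker = Subgroup.normalClosure R := by
    refine le_antisymm ?_ hnclR
    intro w hw
    have hwβ : β w = 1 := hw
    have hwψ : w ∈ (φ.comp β).ker := by
      rw [MonoidHom.mem_ker, MonoidHom.comp_apply, hwβ, map_one]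
    obtain ⟨x, hx⟩ := hTle hwψ
    have hxe : x = Multiplicative.ofAdd (Multiplicative.toAdd x) := rfl
    set e := Multiplicative.toAdd x with he_def
    have hζe : ζ (Multiplicative.ofAdd e) = 1 := by
      rw [← hπzP, ← hxe, hx]
      show π (q w) = 1
      rw [hπq, hwβ]
    have heE : e ∈ AddSubgroup.closure (↑Bf : Set (Fin n → ℤ)) := by
      rw [hBcl]
      exact hζe
    have hzPe : zP (Multiplicative.ofAdd e) = 1 := by
      refine AddSubgroup.closure_induction
        (p := fun v _ => zP (Multiplicative.ofAdd v) = 1) ?_ ?_ ?_ ?_ heE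
      · intro b hb
        rw [← hqyw]
        have : yw b ∈ q.ker := by
          rw [hkerq]
          exact Subgroup.subset_normalClosure (Or.inr ⟨b, hb, rfl⟩)
        rwa [MonoidHom.mem_ker] at this
      · show zP (Multiplicative.ofAdd 0) = 1
        simp
      · intro u v _ _ hu hv
        have : zP (Multiplicative.ofAdd (u + v))
            = zP (Multiplicative.ofAdd u) * zP (Multiplicative.ofAdd v) := by
          rw [← map_mul]; rfl
        rw [this, hu, hv, mul_one]
      · intro u _ hu
        have : zP (Multiplicative.ofAdd (-u)) = (zP (Multiplicative.ofAdd u))⁻¹ := by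
          rw [← map_inv]; rfl
        rw [this, hu, inv_one]
    have hqw1 : q w = 1 := by rw [← hx, hxe, hzPe]
    have : w ∈ q.ker := by rwa [MonoidHom.mem_ker]
    rwa [hkerq] at this
  exact isFinitelyPresented_of_ker β hβ R hRfin hkerβ
lemma isFinitelyPresented_of_subsingleton (G : Type*) [Group G] [Subsingleton G] :
    IsFinitelyPresented G := by
  refine isFinitelyPresented_of_ker (1 : FreeGroup (Fin 0) →* G)
    (fun y => ⟨1, Subsingleton.elim _ _⟩) ∅ Set.finite_empty ?_
  exact Subsingleton.elim _ _

lemma nilpotent_fg_fp_aux : ∀ (n : ℕ) (G : Type u) [Group G] [Group.IsNilpotent G],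
    Group.nilpotencyClass G ≤ n → Group.FG G → IsFinitelyPresented G := by
  intro n
  induction n with
  | zero =>
      intro G _ _ h _
      haveI : Subsingleton G :=
        nilpotencyClass_zero_iff_subsingleton.mp (Nat.le_zero.mp h)
      exact isFinitelyPresented_of_subsingleton G
  | succ n ih =>
      intro G _ _ h hfg
      haveI := hfg
      have hQclass : Group.nilpotencyClass (G ⧸ Subgroup.center G) ≤ n := by
        rw [nilpotencyClass_quotient_center]
        omega
      exact central_extension_fp hfg
        (ih (G ⧸ Subgroup.center G) hQclass inferInstance)


/-- Every finitely generated nilpotent group is finitely presented. -/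

theorem nilpotent_fg_isFinitelyPresented (G : Type*) [Group G]
    (hG : Group.IsNilpotent G) (hfg : Group.FG G) : IsFinitelyPresented G :=
  nilpotent_fg_fp_aux (Group.nilpotencyClass G) G le_rfl hfg
end

section
/- Let G be a group normally generated by x_1, ..., x_n. Then the Milnor group MG is finitely presented; in fact MG is a finitely generated nilpotent group generated by the images of x_1, ..., x_n. -/
open Subgroup
open scoped commutatorElement

section Aux

variable {G : Type*} [Group G]

/-- The centralizer of a normal subgroup is normal. -/
lemma centralizer_normal_of_normal_s7 (H : Subgroup G) [H.Normal] :
    (centralizer (H : Set G)).Normal := by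
  constructor
  intro c hc g
  rw [mem_centralizer_iff] at hc ⊢
  intro h hh
  have h1 : g⁻¹ * h * g ∈ H := by
    simpa using Subgroup.Normal.conj_mem ‹H.Normal› h hh g⁻¹
  have := hc _ h1
  have : g * ((g⁻¹ * h * g) * c) * g⁻¹ = g * (c * (g⁻¹ * h * g)) * g⁻¹ := by rw [this]
  calc h * (g * c * g⁻¹) = g * ((g⁻¹ * h * g) * c) * g⁻¹ := by group
    _ = g * (c * (g⁻¹ * h * g)) * g⁻¹ := this
    _ = g * c * g⁻¹ * h := by group

/-- A subgroup contained in the center is normal. -/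
lemma normal_of_le_center {H : Subgroup G} (h : H ≤ center G) : H.Normal := by
  constructor
  intro a ha g
  have := (Subgroup.mem_center_iff.mp (h ha)) g
  rw [show g * a * g⁻¹ = a by rw [this]; group]
  exact ha

/-- A supremum of normal subgroups is normal. -/
lemma normal_iSup_of_normal {ι : Sort*} (N : ι → Subgroup G) (h : ∀ i, (N i).Normal) :
    (⨆ i, N i).Normal := by
  constructor
  intro a ha g
  refine Subgroup.iSup_induction N ha (C := fun a => g * a * g⁻¹ ∈ ⨆ i, N i) ?_ ?_ ?_
  · intro i x hx
    exact le_iSup N i ((h i).conj_mem x hx g)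
  · simpa using (⨆ i, N i).one_mem
  · intro x y hx hy
    have : g * (x * y) * g⁻¹ = (g * x * g⁻¹) * (g * y * g⁻¹) := by group
    rw [this]; exact mul_mem hx hy

lemma commutatorElement_central_left {z h k : G} (hz : z ∈ center G) :
    ⁅h * z, k⁆ = ⁅h, k⁆ := by
  have hzc := Subgroup.mem_center_iff.mp hz
  show h * z * k * (h * z)⁻¹ * k⁻¹ = h * k * h⁻¹ * k⁻¹
  rw [show h * z * k * (h * z)⁻¹ * k⁻¹ = h * (z * k * z⁻¹) * h⁻¹ * k⁻¹ by group,
    show z * k * z⁻¹ = k by rw [← hzc k]; group]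

lemma commutatorElement_central_right {z h k : G} (hz : z ∈ center G) :
    ⁅h, k * z⁆ = ⁅h, k⁆ := by
  have hzc := Subgroup.mem_center_iff.mp hz
  show h * (k * z) * h⁻¹ * (k * z)⁻¹ = h * k * h⁻¹ * k⁻¹
  rw [show h * (k * z) * h⁻¹ * (k * z)⁻¹ = h * k * (z * h⁻¹ * z⁻¹) * k⁻¹ by group,
    show z * h⁻¹ * z⁻¹ = h⁻¹ by rw [← hzc h⁻¹]; group]

end Aux


section WSet
variable {G : Type*} [Group G]

/-- Iterated left-normed commutators of elements of `X`. -/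
def wSet (X : Set G) : ℕ → Set G
  | 0 => X
  | k + 1 => Set.image2 (fun w x => ⁅w, x⁆) (wSet X k) X

lemma wSet_finite {X : Set G} (hX : X.Finite) (k : ℕ) : (wSet X k).Finite := by
  induction k with
  | zero => exact hX
  | succ k ih => exact Set.Finite.image2 _ ih hX

lemma wSet_subset_lcs (X : Set G) (k : ℕ) : wSet X k ⊆ (⊤ : Subgroup G).lowerCentralSeries k := by
  induction k with
  | zero => exact fun x _ => Subgroup.mem_top x
  | succ k ih =>
    rintro a ⟨w, hw, x, hx, rfl⟩
    exact Subgroup.commutator_mem_commutator (ih hw) (Subgroup.mem_top x)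

lemma wSet_image {H : Type*} [Group H] (f : G →* H) (X : Set G) (k : ℕ) :
    wSet (f '' X) k = f '' wSet X k := by
  induction k with
  | zero => rfl
  | succ k ih =>
    ext a
    simp only [wSet, ih, Set.mem_image2, Set.mem_image]
    constructor
    · rintro ⟨w, ⟨w', hw', rfl⟩, x, ⟨x', hx', rfl⟩, rfl⟩
      exact ⟨⁅w', x'⁆, ⟨w', hw', x', hx', rfl⟩, map_commutatorElement f w' x'⟩
    · rintro ⟨a', ⟨w', hw', x', hx', rfl⟩, rfl⟩
      exact ⟨f w', ⟨w', hw', rfl⟩, f x', ⟨x', hx', rfl⟩, (map_commutatorElement f w' x').symm⟩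

/-- In a group generated by `X`, the lower central series terms are the normal
closures of the iterated commutators in the generators. -/
lemma lcs_eq_normalClosure_wSet {X : Set G} (hX : Subgroup.closure X = ⊤) (k : ℕ) :
    (⊤ : Subgroup G).lowerCentralSeries k = Subgroup.normalClosure (wSet X k) := by
  induction k with
  | zero =>
    refine le_antisymm ?_ le_top
    calc (⊤ : Subgroup G) = Subgroup.closure X := hX.symm
      _ ≤ Subgroup.normalClosure X := Subgroup.closure_le_normalClosure
  | succ k ih =>
    refine le_antisymm ?_ (Subgroup.normalClosure_le_normal (wSet_subset_lcs X (k + 1)))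
    have hsucc : (⊤ : Subgroup G).lowerCentralSeries (k + 1) = ⁅(⊤ : Subgroup G).lowerCentralSeries k, (⊤ : Subgroup G)⁆ := rfl
    rw [hsucc, ih]
    set C : Subgroup G := Subgroup.normalClosure (wSet X (k + 1)) with hC
    -- key: images of `wSet X k` are central in `G ⧸ C`
    have hcen : ∀ w ∈ wSet X k, (QuotientGroup.mk' C w) ∈ Subgroup.center (G ⧸ C) := by
      intro w hw
      rw [Subgroup.mem_center_iff]
      intro q
      induction q using QuotientGroup.induction_on with
      | _ g =>
        have hg : g ∈ Subgroup.closure X := hX ▸ Subgroup.mem_top g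
        have : Commute ((QuotientGroup.mk' C) w) ((QuotientGroup.mk' C) g) := by
          refine Subgroup.closure_induction (fun y hy => ?_) (Commute.one_right _)
            (fun y z _ _ hy hz => Commute.mul_right hy hz)
            (fun y _ hy => Commute.inv_right hy) hg
          rw [← commutatorElement_eq_one_iff_commute, ← map_commutatorElement,
            ← MonoidHom.mem_ker, QuotientGroup.ker_mk']
          exact Subgroup.subset_normalClosure ⟨w, hw, y, hy, rfl⟩
        exact this.symm.eq
    have hcen' : Subgroup.normalClosure (wSet X k) ≤ Subgroup.comap (QuotientGroup.mk' C) (Subgroup.center (G ⧸ C)) := by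
      haveI : (Subgroup.comap (QuotientGroup.mk' C) (Subgroup.center (G ⧸ C))).Normal :=
        Subgroup.Normal.comap (inferInstance : (Subgroup.center (G ⧸ C)).Normal) _
      exact Subgroup.normalClosure_le_normal (fun w hw => Subgroup.mem_comap.mpr (hcen w hw))
    rw [Subgroup.commutator_le]
    intro c hc g _
    have : (QuotientGroup.mk' C) ⁅c, g⁆ = 1 := by
      rw [map_commutatorElement, commutatorElement_eq_one_iff_commute]
      exact ((Subgroup.mem_center_iff.mp (hcen' hc)) _).symm
    rwa [← MonoidHom.mem_ker, QuotientGroup.ker_mk'] at this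

end WSet

section Nilp
/-- Fitting-type lemma: if a group is the join of `n` normal abelian subgroups,
it is nilpotent of class at most `n`. -/
lemma lcs_eq_bot_of_iSup_normal_abelian :
    ∀ (n : ℕ) (Q : Type*) [Group Q] (N : Fin n → Subgroup Q),
      (∀ i, (N i).Normal) → (∀ i, ⁅N i, N i⁆ = ⊥) → (⨆ i, N i = ⊤) →
      (⊤ : Subgroup Q).lowerCentralSeries n = ⊥ := by
  intro n
  induction n with
  | zero =>
    intro Q _ N _ _ hsup
    have : (⊤ : Subgroup Q) = ⊥ := by rw [← hsup]; exact iSup_of_empty N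
    rw [Subgroup.lowerCentralSeries_zero, this]
  | succ n ih =>
    intro Q _ N hnorm hab hsup
    -- step 1 : lowerCentralSeries Q n ≤ N j for every j
    have hstep : ∀ j, (⊤ : Subgroup Q).lowerCentralSeries n ≤ N j := by
      intro j
      haveI := hnorm j
      set π := QuotientGroup.mk' (N j) with hπ
      have hπs : Function.Surjective π := QuotientGroup.mk'_surjective (N j)
      have hbot : (⊤ : Subgroup (Q ⧸ N j)).lowerCentralSeries n = ⊥ := by
        refine ih (Q ⧸ N j) (fun i => Subgroup.map π (N (j.succAbove i)))
          (fun i => Subgroup.Normal.map (hnorm _) π hπs) (fun i => ?_) ?_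
        · rw [← Subgroup.map_commutator, hab, Subgroup.map_bot]
        · refine le_antisymm le_top ?_
          have : Subgroup.map π ⊤ = ⊤ := Subgroup.map_top_of_surjective π hπs
          rw [← this, ← hsup, Subgroup.map_iSup]
          refine iSup_le fun i => ?_
          rcases eq_or_ne i j with rfl | hij
          · have : Subgroup.map π (N i) ≤ ⊥ := by
              rw [Subgroup.map_le_iff_le_comap]
              intro a ha
              simp only [Subgroup.mem_comap, Subgroup.mem_bot]
              rw [hπ, QuotientGroup.mk'_apply, QuotientGroup.eq_one_iff]
              exact ha
            exact this.trans bot_le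
          · obtain ⟨k, rfl⟩ := Fin.exists_succAbove_eq hij
            exact le_iSup (fun i => Subgroup.map π (N (j.succAbove i))) k
      have := (Subgroup.lowerCentralSeries.map π n).trans (le_of_eq hbot)
      intro a ha
      have : π a ∈ (⊥ : Subgroup (Q ⧸ N j)) := this ⟨a, ha, rfl⟩
      rwa [Subgroup.mem_bot, QuotientGroup.mk'_apply, QuotientGroup.eq_one_iff] at this
    -- step 2 : kill the next commutator
    show ⁅(⊤ : Subgroup Q).lowerCentralSeries n, (⊤ : Subgroup Q)⁆ = ⊥
    nth_rw 2 [← hsup]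
    rw [Subgroup.commutator_comm]
    rw [Subgroup.commutator_eq_bot_iff_le_centralizer]
    refine iSup_le fun i => ?_
    rw [← Subgroup.commutator_eq_bot_iff_le_centralizer]
    have : ⁅N i, (⊤ : Subgroup Q).lowerCentralSeries n⁆ ≤ ⁅N i, N i⁆ :=
      Subgroup.commutator_mono le_rfl (hstep i)
    rw [hab i] at this
    exact le_bot_iff.mp this

/-- In a nilpotent group, a subgroup which together with the commutator subgroup
generates the whole group is the whole group. -/
lemma eq_top_of_sup_commutator_eq_top {Q : Type*} [Group Q] [hQ : Group.IsNilpotent Q]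
    (H : Subgroup Q) (h : H ⊔ commutator Q = ⊤) : H = ⊤ := by
  suffices key : ∀ (c : ℕ) (Q : Type _) [Group Q] [Group.IsNilpotent Q],
      Group.nilpotencyClass Q ≤ c → ∀ H : Subgroup Q, H ⊔ commutator Q = ⊤ → H = ⊤ by
    exact key (Group.nilpotencyClass Q) Q le_rfl H h
  clear h H hQ
  clear! Q
  intro c
  induction c with
  | zero =>
    intro Q _ _ hc H _
    haveI : Subsingleton Q := (nilpotencyClass_zero_iff_subsingleton).mp (le_antisymm hc (Nat.zero_le _))
    refine le_antisymm le_top fun a _ => ?_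
    rw [Subsingleton.elim a 1]; exact H.one_mem
  | succ c ih =>
    intro Q _ _ hc H h
    set Z := Subgroup.center Q
    set π := QuotientGroup.mk' Z with hπ
    have hπs : Function.Surjective π := QuotientGroup.mk'_surjective Z
    have hc' : Group.nilpotencyClass (Q ⧸ Z) ≤ c := by
      rw [nilpotencyClass_quotient_center]
      omega
    have h' : Subgroup.map π H ⊔ commutator (Q ⧸ Z) = ⊤ := by
      have : commutator (Q ⧸ Z) = Subgroup.map π (commutator Q) := by
        rw [commutator_def, commutator_def, Subgroup.map_commutator,
          Subgroup.map_top_of_surjective π hπs]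
      rw [this, ← Subgroup.map_sup, h, Subgroup.map_top_of_surjective π hπs]
    have hH' : Subgroup.map π H = ⊤ := ih (Q ⧸ Z) hc' _ h'
    have hsup : H ⊔ Z = ⊤ := by
      have := congrArg (Subgroup.comap π) hH'
      rwa [Subgroup.comap_map_eq, Subgroup.comap_top, hπ, QuotientGroup.ker_mk'] at this
    have hcomm : commutator Q ≤ H := by
      rw [commutator_def, Subgroup.commutator_le]
      intro a _ b _
      have ha : a ∈ (↑(H ⊔ Z) : Set Q) := by rw [hsup]; trivial
      have hb : b ∈ (↑(H ⊔ Z) : Set Q) := by rw [hsup]; trivial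
      rw [Subgroup.mul_normal] at ha hb
      obtain ⟨h₁, hh₁, z₁, hz₁, rfl⟩ := ha
      obtain ⟨h₂, hh₂, z₂, hz₂, rfl⟩ := hb
      rw [commutatorElement_central_left hz₁, commutatorElement_central_right hz₂]
      show h₁ * h₂ * h₁⁻¹ * h₂⁻¹ ∈ H
      exact mul_mem (mul_mem (mul_mem hh₁ hh₂) (inv_mem hh₁)) (inv_mem hh₂)
    have htop : (⊤ : Subgroup Q) ≤ H := by rw [← h]; exact sup_le le_rfl hcomm
    exact le_antisymm le_top htop
end Nilp
section FG
variable {G : Type*} [Group G]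

open scoped IsMulCommutative in
/-- A subgroup of a finitely generated "abelian" subgroup is finitely generated. -/
lemma fg_of_le_fg_comm {A B : Subgroup G} (hBA : B ≤ A) (hA : A.FG)
    (hcomm : ∀ x ∈ A, ∀ y ∈ A, x * y = y * x) : B.FG := by
  haveI hAc : IsMulCommutative A :=
    ⟨⟨fun a b => Subtype.ext (hcomm a a.2 b b.2)⟩⟩
  haveI : Group.FG A := (Group.fg_iff_subgroup_fg A).mpr hA
  haveI : AddGroup.FG (Additive A) := AddGroup.fg_of_group_fg
  haveI : Module.Finite ℤ (Additive A) := Module.Finite.iff_addGroup_fg.mpr ‹_›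
  haveI : IsNoetherian ℤ (Additive A) := isNoetherian_of_isNoetherianRing_of_finite ℤ _
  set B' : Subgroup A := B.subgroupOf A
  have hB' : B'.FG := by
    rw [Subgroup.fg_iff_add_fg]
    have := IsNoetherian.noetherian (AddSubgroup.toIntSubmodule B'.toAddSubgroup)
    rwa [Submodule.fg_iff_addSubgroup_fg, AddSubgroup.toIntSubmodule_toAddSubgroup] at this
  obtain ⟨S, hS⟩ := hB'
  rw [Subgroup.fg_iff]
  refine ⟨A.subtype '' ↑S, ?_, (S.finite_toSet.image _)⟩
  have : Subgroup.map A.subtype B' = B := by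
    rw [Subgroup.subgroupOf_map_subtype, inf_eq_left.mpr hBA]
  rw [← MonoidHom.map_closure (N := _), hS, this]

/-- Gluing: a subgroup is finitely generated if its intersection with the kernel
and its image are. -/
lemma fg_of_inf_ker_of_map {G' : Type*} [Group G'] (f : G →* G') (H : Subgroup G)
    (h1 : (H ⊓ f.ker).FG) (h2 : (Subgroup.map f H).FG) : H.FG := by
  obtain ⟨S₀, hS₀⟩ := h1
  obtain ⟨S', hS'⟩ := h2
  have hex : ∀ s : S', ∃ g : G, g ∈ H ∧ f g = s := by
    rintro ⟨s, hs⟩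
    have : (s : G') ∈ Subgroup.map f H := by rw [← hS']; exact Subgroup.subset_closure hs
    obtain ⟨g, hg, hfg⟩ := this
    exact ⟨g, hg, hfg⟩
  choose ℓ hℓH hℓf using hex
  rw [Subgroup.fg_iff]
  refine ⟨↑S₀ ∪ Set.range ℓ, ?_, (S₀.finite_toSet.union (Set.finite_range ℓ))⟩
  apply le_antisymm
  · rw [Subgroup.closure_le]
    rintro a (ha | ⟨s, rfl⟩)
    · have : a ∈ H ⊓ f.ker := by rw [← hS₀]; exact Subgroup.subset_closure ha
      exact this.1
    · exact hℓH s
  · intro h hh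
    have hfh : f h ∈ Subgroup.closure (f '' Set.range ℓ) := by
      have himg : f '' Set.range ℓ = ↑S' := by
        ext y; constructor
        · rintro ⟨_, ⟨s, rfl⟩, rfl⟩; rw [hℓf s]; exact s.2
        · intro hy; exact ⟨ℓ ⟨y, hy⟩, ⟨⟨y, hy⟩, rfl⟩, hℓf _⟩
      rw [himg, hS']
      exact ⟨h, hh, rfl⟩
    rw [← MonoidHom.map_closure (N := _)] at hfh
    obtain ⟨t, ht, hft⟩ := hfh
    have htH : t ∈ H := by
      have : Subgroup.closure (Set.range ℓ) ≤ H := by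
        rw [Subgroup.closure_le]; rintro a ⟨s, rfl⟩; exact hℓH s
      exact this ht
    have hker : h * t⁻¹ ∈ H ⊓ f.ker := by
      rw [Subgroup.mem_inf]
      refine ⟨mul_mem hh (inv_mem htH), ?_⟩
      rw [MonoidHom.mem_ker, map_mul, map_inv, hft, mul_inv_cancel]
    have h1 : h * t⁻¹ ∈ Subgroup.closure (↑S₀ ∪ Set.range ℓ) := by
      rw [← hS₀] at hker
      exact Subgroup.closure_mono Set.subset_union_left hker
    have h2 : t ∈ Subgroup.closure (↑S₀ ∪ Set.range ℓ) :=
      Subgroup.closure_mono Set.subset_union_right ht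
    simpa using mul_mem h1 h2

end FG
section Noeth

/-- Every subgroup of a finitely generated group with `lowerCentralSeries G n = ⊥`
(e.g. a f.g. nilpotent group) is finitely generated. -/
lemma subgroup_fg_of_lcs_bot {N : Type*} [Group N] {X : Set N}
    (hX : Subgroup.closure X = ⊤) (hfin : X.Finite) {n : ℕ}
    (hbot : (⊤ : Subgroup N).lowerCentralSeries n = ⊥) (H : Subgroup N) : H.FG := by
  have key : ∀ d : ℕ, ∀ H : Subgroup N, H ≤ (⊤ : Subgroup N).lowerCentralSeries (n - d) → H.FG := by
    intro d
    induction d with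
    | zero =>
      intro H hH
      rw [Nat.sub_zero, hbot, le_bot_iff] at hH
      exact ⟨∅, by simp [hH]⟩
    | succ d ih =>
      intro H hH
      by_cases hnd : n ≤ d
      · exact ih H (by rwa [show n - d = n - (d+1) by omega])
      set k := n - (d + 1) with hkdef
      have hk : n - d = k + 1 := by omega
      set K := (⊤ : Subgroup N).lowerCentralSeries (k + 1)
      set L := (⊤ : Subgroup N).lowerCentralSeries k with hLdef
      have hHL : H ≤ L := hH
      set π := QuotientGroup.mk' K with hπ
      have hπs : Function.Surjective π := QuotientGroup.mk'_surjective K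
      have hWc : ∀ w ∈ wSet X k, π w ∈ Subgroup.center (N ⧸ K) := by
        intro w hw
        rw [Subgroup.mem_center_iff]
        intro q
        induction q using QuotientGroup.induction_on with
        | _ g =>
          have : ⁅w, g⁆ ∈ K :=
            Subgroup.commutator_mem_commutator (wSet_subset_lcs X k hw) (Subgroup.mem_top g)
          have : (π ⁅w, g⁆ : N ⧸ K) = 1 := by
            rwa [← MonoidHom.mem_ker, QuotientGroup.ker_mk']
          rw [map_commutatorElement, commutatorElement_eq_one_iff_commute] at this
          exact this.symm.eq
      have hLW : L = Subgroup.normalClosure (wSet X k) := lcs_eq_normalClosure_wSet hX k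
      have hmapL : Subgroup.map π L = Subgroup.normalClosure (π '' wSet X k) := by
        rw [hLW, Subgroup.map_normalClosure _ _ hπs]
      have hA_le : Subgroup.map π L ≤ Subgroup.center (N ⧸ K) := by
        rw [hmapL]
        exact Subgroup.normalClosure_le_normal (by rintro a ⟨w, hw, rfl⟩; exact hWc w hw)
      have hA_fg : (Subgroup.map π L).FG := by
        have hsubc : π '' wSet X k ⊆ ↑(Subgroup.center (N ⧸ K)) := by
          rintro a ⟨w, hw, rfl⟩; exact hWc w hw
        haveI : (Subgroup.closure (π '' wSet X k)).Normal :=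
          normal_of_le_center ((Subgroup.closure_le _).mpr hsubc)
        have : Subgroup.map π L = Subgroup.closure (π '' wSet X k) := by
          rw [hmapL]
          exact le_antisymm (Subgroup.normalClosure_le_normal Subgroup.subset_closure)
            Subgroup.closure_le_normalClosure
        rw [this, Subgroup.fg_iff]
        exact ⟨π '' wSet X k, rfl, (wSet_finite hfin k).image _⟩
      have hB : (Subgroup.map π H).FG :=
        fg_of_le_fg_comm (Subgroup.map_mono hHL) hA_fg
          (fun a ha b hb => ((Subgroup.mem_center_iff.mp (hA_le hb)) a))
      have hker : (H ⊓ π.ker).FG := by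
        refine ih (H ⊓ π.ker) ?_
        rw [hk, hπ, QuotientGroup.ker_mk']
        exact inf_le_right
      exact fg_of_inf_ker_of_map π H hker hB
  refine key n H ?_
  rw [Nat.sub_self]
  exact le_top

end Noeth
lemma normal_of_commutator_le' {G : Type*} [Group G] {H : Subgroup G}
    (h : commutator G ≤ H) : H.Normal := by
  constructor
  intro a ha g
  have hc : ⁅g, a⁆ ∈ H := h (Subgroup.commutator_mem_commutator (Subgroup.mem_top g) (Subgroup.mem_top a))
  have : g * a * g⁻¹ = ⁅g, a⁆ * a := by group
  rw [this]
  exact mul_mem hc ha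

set_option maxHeartbeats 1000000 in
/-- If `G` is normally generated by `x₁, …, xₙ`, then the Milnor group `MG` is a
nilpotent group generated by the images of the `xᵢ`, and it is finitely presented. -/
theorem milnorGroup_isFinitelyPresented {G : Type*} [Group G] {n : ℕ} (x : Fin n → G)
    (hgen : Subgroup.normalClosure (Set.range x) = ⊤) :
    Subgroup.closure
        (Set.range fun i => (QuotientGroup.mk (x i) : G ⧸ milnorRelators x)) = ⊤ ∧
    Group.IsNilpotent (G ⧸ milnorRelators x) ∧
    IsFinitelyPresented (G ⧸ milnorRelators x) := by
  set Q := G ⧸ milnorRelators x with hQ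
  set q : G →* Q := QuotientGroup.mk' (milnorRelators x) with hq
  have hqs : Function.Surjective q := QuotientGroup.mk'_surjective _
  set z : Fin n → Q := fun i => q (x i) with hzdef
  -- each `z i` commutes with all of its conjugates
  have hconj : ∀ (i : Fin n) (g : Q), Commute (z i) (g * z i * g⁻¹) := by
    intro i g
    obtain ⟨y, rfl⟩ := hqs g
    have hrel : (x i)⁻¹ * ((y⁻¹)⁻¹ * x i * y⁻¹)⁻¹ * x i * ((y⁻¹)⁻¹ * x i * y⁻¹) ∈
        milnorRelators x :=
      Subgroup.subset_normalClosure ⟨i, y⁻¹, rfl⟩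
    have h1 : (z i)⁻¹ * (q y * z i * (q y)⁻¹)⁻¹ * z i * (q y * z i * (q y)⁻¹) = 1 := by
      rw [inv_inv] at hrel
      exact (QuotientGroup.eq_one_iff ((x i)⁻¹ * (y * x i * y⁻¹)⁻¹ * x i * (y * x i * y⁻¹))).mpr hrel
    set c := q y * z i * (q y)⁻¹
    have h2 : z i * c = c * z i := by
      conv_lhs => rw [show z i * c = (c * z i) * ((z i)⁻¹ * c⁻¹ * z i * c) by group]
      rw [h1, mul_one]
    exact h2
  -- the normal closures of the `z i`
  set N : Fin n → Subgroup Q := fun i => Subgroup.normalClosure {z i} with hN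
  have hNnorm : ∀ i, (N i).Normal := fun i => Subgroup.normalClosure_normal
  have hNab : ∀ i, ⁅N i, N i⁆ = ⊥ := by
    intro i
    have hcent : z i ∈ Subgroup.centralizer (N i : Set Q) := by
      rw [Subgroup.mem_centralizer_iff]
      intro h hh
      have : Commute (z i) h := by
        have hh' : h ∈ Subgroup.closure (Group.conjugatesOfSet {z i}) := hh
        refine Subgroup.closure_induction (fun a ha => ?_) (Commute.one_right _)
          (fun a b _ _ h1 h2 => Commute.mul_right h1 h2)
          (fun a _ h1 => Commute.inv_right h1) hh'
        obtain ⟨b, hb, hab⟩ := Group.mem_conjugatesOfSet_iff.mp ha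
        rw [Set.mem_singleton_iff] at hb
        subst hb
        obtain ⟨g, rfl⟩ := isConj_iff.mp hab
        exact hconj i g
      exact this.symm.eq
    rw [Subgroup.commutator_eq_bot_iff_le_centralizer]
    haveI := hNnorm i
    haveI := centralizer_normal_of_normal_s7 (N i)
    exact Subgroup.normalClosure_le_normal (Set.singleton_subset_iff.mpr hcent)
  have hNsup : ⨆ i, N i = ⊤ := by
    haveI := normal_iSup_of_normal N hNnorm
    have h1 : Subgroup.normalClosure (Set.range z) = ⊤ := by
      have := congrArg (Subgroup.map q) hgen
      rwa [Subgroup.map_normalClosure _ _ hqs, Subgroup.map_top_of_surjective _ hqs,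
        show q '' Set.range x = Set.range z by rw [← Set.range_comp]; rfl] at this
    rw [eq_top_iff, ← h1]
    refine Subgroup.normalClosure_le_normal ?_
    rintro a ⟨i, rfl⟩
    exact le_iSup N i (Subgroup.subset_normalClosure rfl)
  have hLCSQ : (⊤ : Subgroup Q).lowerCentralSeries n = ⊥ :=
    lcs_eq_bot_of_iSup_normal_abelian n Q N hNnorm hNab hNsup
  haveI hnilp : Group.IsNilpotent Q := Subgroup.nilpotent_iff_lowerCentralSeries.mpr ⟨n, hLCSQ⟩
  -- generation by the `z i`
  have hclosure : Subgroup.closure (Set.range z) = ⊤ := by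
    have h1 : Subgroup.normalClosure (Set.range z) = ⊤ := by
      have := congrArg (Subgroup.map q) hgen
      rwa [Subgroup.map_normalClosure _ _ hqs, Subgroup.map_top_of_surjective _ hqs,
        show q '' Set.range x = Set.range z by rw [← Set.range_comp]; rfl] at this
    have hsup : Subgroup.closure (Set.range z) ⊔ commutator Q = ⊤ := by
      refine le_antisymm le_top ?_
      rw [← h1]
      haveI : (Subgroup.closure (Set.range z) ⊔ commutator Q).Normal :=
        normal_of_commutator_le' le_sup_right
      exact Subgroup.normalClosure_le_normal
        (fun a ha => (le_sup_left : Subgroup.closure (Set.range z) ≤ _) (Subgroup.subset_closure ha))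
    exact eq_top_of_sup_commutator_eq_top _ hsup
  have hclosure' : Subgroup.closure
      (Set.range fun i => (QuotientGroup.mk (x i) : G ⧸ milnorRelators x)) = ⊤ := by
    have hzz : (fun i => (QuotientGroup.mk (x i) : G ⧸ milnorRelators x)) = z := rfl
    rw [hzz]
    exact hclosure
  refine ⟨hclosure', hnilp, ?_⟩
  -- finite presentation
  set F := FreeGroup (Fin n) with hF
  set φ : F →* Q := FreeGroup.lift z with hφ
  have hφs : Function.Surjective φ := by
    rw [← MonoidHom.range_eq_top, hφ, FreeGroup.range_lift_eq_closure, hclosure]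
  set XF : Set F := Set.range (FreeGroup.of : Fin n → F) with hXF
  have hXFtop : Subgroup.closure XF = ⊤ := FreeGroup.closure_range_of (Fin n)
  have hWfin : (wSet XF n).Finite := wSet_finite (Set.finite_range _) n
  have hLCSF : (⊤ : Subgroup F).lowerCentralSeries n = Subgroup.normalClosure (wSet XF n) :=
    lcs_eq_normalClosure_wSet hXFtop n
  have hLCSker : (⊤ : Subgroup F).lowerCentralSeries n ≤ φ.ker := by
    intro a ha
    have : φ a ∈ (⊤ : Subgroup Q).lowerCentralSeries n := Subgroup.lowerCentralSeries.map φ n ⟨a, ha, rfl⟩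
    rw [hLCSQ, Subgroup.mem_bot] at this
    exact this
  set π : F →* F ⧸ (⊤ : Subgroup F).lowerCentralSeries n := QuotientGroup.mk' ((⊤ : Subgroup F).lowerCentralSeries n) with hπ
  have hπs : Function.Surjective π := QuotientGroup.mk'_surjective _
  set XN : Set (F ⧸ (⊤ : Subgroup F).lowerCentralSeries n) := π '' XF with hXN
  have hXNtop : Subgroup.closure XN = ⊤ := by
    rw [hXN, ← MonoidHom.map_closure, hXFtop, Subgroup.map_top_of_surjective _ hπs]
  have hbotN : (⊤ : Subgroup (F ⧸ (⊤ : Subgroup F).lowerCentralSeries n)).lowerCentralSeries n = ⊥ := by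
    rw [lcs_eq_normalClosure_wSet hXNtop n]
    refine le_antisymm (Subgroup.normalClosure_le_normal ?_) bot_le
    rw [hXN, wSet_image]
    rintro a ⟨w, hw, rfl⟩
    have : w ∈ (⊤ : Subgroup F).lowerCentralSeries n := wSet_subset_lcs XF n hw
    have : π w = 1 := by
      rw [hπ, QuotientGroup.mk'_apply, QuotientGroup.eq_one_iff]
      exact this
    simp [this]
  -- the image of the kernel is finitely generated
  have hXNfin : XN.Finite := by
    rw [hXN, hXF]
    exact (Set.finite_range _).image _
  have hK'' : (Subgroup.map π φ.ker).FG :=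
    subgroup_fg_of_lcs_bot hXNtop hXNfin hbotN _
  obtain ⟨T', hT'⟩ := hK''
  have hex : ∀ t : T', ∃ g : F, g ∈ φ.ker ∧ π g = t := by
    rintro ⟨t, ht⟩
    have : (t : F ⧸ (⊤ : Subgroup F).lowerCentralSeries n) ∈ Subgroup.map π φ.ker := by
      rw [← hT']; exact Subgroup.subset_closure ht
    obtain ⟨g, hg, hgt⟩ := this
    exact ⟨g, hg, hgt⟩
  choose ℓ hℓker hℓπ using hex
  have hkerchar : φ.ker = Subgroup.normalClosure (wSet XF n ∪ Set.range ℓ) := by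
    apply le_antisymm
    · intro a ha
      have hπa : π a ∈ Subgroup.closure (π '' Set.range ℓ) := by
        have himg : π '' Set.range ℓ = ↑T' := by
          ext y; constructor
          · rintro ⟨_, ⟨s, rfl⟩, rfl⟩; rw [hℓπ s]; exact s.2
          · intro hy; exact ⟨ℓ ⟨y, hy⟩, ⟨⟨y, hy⟩, rfl⟩, hℓπ _⟩
        rw [himg, hT']
        exact ⟨a, ha, rfl⟩
      rw [← MonoidHom.map_closure] at hπa
      obtain ⟨t, ht, hta⟩ := hπa
      have h1 : a * t⁻¹ ∈ Subgroup.normalClosure (wSet XF n ∪ Set.range ℓ) := by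
        have : a * t⁻¹ ∈ (⊤ : Subgroup F).lowerCentralSeries n := by
          have : π (a * t⁻¹) = 1 := by
            rw [map_mul, map_inv, hta, mul_inv_cancel]
          rwa [hπ, QuotientGroup.mk'_apply, QuotientGroup.eq_one_iff] at this
        rw [hLCSF] at this
        exact Subgroup.normalClosure_mono Set.subset_union_left this
      have h2 : t ∈ Subgroup.normalClosure (wSet XF n ∪ Set.range ℓ) := by
        have : Subgroup.closure (Set.range ℓ) ≤
            Subgroup.normalClosure (wSet XF n ∪ Set.range ℓ) := by
          rw [Subgroup.closure_le]
          exact fun b hb => Subgroup.subset_normalClosure (Set.subset_union_right hb)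
        exact this ht
      simpa using mul_mem h1 h2
    · refine Subgroup.normalClosure_le_normal ?_
      rintro a (ha | ⟨s, rfl⟩)
      · exact hLCSker (wSet_subset_lcs XF n ha)
      · exact hℓker s
  have hfinS : (wSet XF n ∪ Set.range ℓ).Finite := hWfin.union (Set.finite_range ℓ)
  refine ⟨n, hfinS.toFinset, ⟨?_⟩⟩
  have hcoe : (hfinS.toFinset : Set F) = wSet XF n ∪ Set.range ℓ := Set.Finite.coe_toFinset _
  have heq : Subgroup.normalClosure (hfinS.toFinset : Set F) = φ.ker := by
    rw [hcoe, ← hkerchar]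
  exact ((QuotientGroup.quotientMulEquivOfEq heq).trans
    (QuotientGroup.quotientKerEquivOfSurjective φ hφs)).symm
end

section
/- Let MF_n denote the Milnor group of the free group F on generators x_1,...,x_n, i.e., F modulo the normal closure of all [x_i, x_i^y] for y ∈ F. Then MF_n is a finitely presented nilpotent group of class at most n. -/
open Subgroup
open scoped commutatorElement

universe u

section Helpers

variable {G : Type u} [Group G]

private lemma mul_comm_of_relator {a c : G} (h : a⁻¹ * c⁻¹ * a * c = 1) : a * c = c * a := by
  have h2 : c * a * (a⁻¹ * c⁻¹ * a * c) = c * a := by rw [h, mul_one]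
  calc a * c = c * a * (a⁻¹ * c⁻¹ * a * c) := by group
  _ = c * a := h2

private lemma conj_comm {a : G} (h : ∀ y : G, a * (y⁻¹ * a * y) = (y⁻¹ * a * y) * a)
    (u v : G) : (u * a * u⁻¹) * (v * a * v⁻¹) = (v * a * v⁻¹) * (u * a * u⁻¹) := by
  have e1 : (u * a * u⁻¹) * (v * a * v⁻¹)
      = u * (a * ((v⁻¹ * u)⁻¹ * a * (v⁻¹ * u))) * u⁻¹ := by group
  have e2 : (v * a * v⁻¹) * (u * a * u⁻¹)
      = u * (((v⁻¹ * u)⁻¹ * a * (v⁻¹ * u)) * a) * u⁻¹ := by group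
  rw [e1, e2, h (v⁻¹ * u)]

/-- If `a` commutes with all of its conjugates, its normal closure is "abelian". -/
lemma normalClosure_singleton_comm {a : G}
    (h : ∀ y : G, a * (y⁻¹ * a * y) = (y⁻¹ * a * y) * a) :
    ∀ g ∈ Subgroup.normalClosure ({a} : Set G), ∀ k ∈ Subgroup.normalClosure ({a} : Set G), g * k = k * g := by
  intro g hg k hk
  have hg' : g ∈ closure (Group.conjugatesOfSet ({a} : Set G)) := hg
  have hk' : k ∈ closure (Group.conjugatesOfSet ({a} : Set G)) := hk
  refine closure_induction₂ (p := fun x y _ _ => x * y = y * x) ?_ ?_ ?_ ?_ ?_ ?_ ?_ hg' hk'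
  · intro x y hx hy
    obtain ⟨b, hb, hbx⟩ := Group.mem_conjugatesOfSet_iff.mp hx
    obtain ⟨c, hc, hcy⟩ := Group.mem_conjugatesOfSet_iff.mp hy
    rw [Set.mem_singleton_iff] at hb hc; subst hb; subst hc
    obtain ⟨u, hu⟩ := isConj_iff.mp hbx
    obtain ⟨v, hv⟩ := isConj_iff.mp hcy
    rw [← hu, ← hv]
    exact conj_comm h u v
  · intro x _; rw [one_mul, mul_one]
  · intro x _; rw [one_mul, mul_one]
  · intro x y z _ _ _ h1 h2
    calc x * y * z = x * (z * y) := by rw [mul_assoc, h2]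
    _ = z * (x * y) := by rw [← mul_assoc, h1, mul_assoc]
  · intro y z x _ _ _ h1 h2
    calc x * (y * z) = y * (x * z) := by rw [← mul_assoc, h1, mul_assoc]
    _ = y * z * x := by rw [mul_assoc, h2, ← mul_assoc]
  · intro x y _ _ h1
    have := congrArg (fun w => x⁻¹ * w * x⁻¹) h1
    simpa [mul_assoc] using this.symm
  · intro x y _ _ h1
    have := congrArg (fun w => y⁻¹ * w * y⁻¹) h1
    simpa [mul_assoc] using this.symm

/-- Lower central series maps onto lower central series under surjections. -/
lemma lcs_map_eq {H : Type*} [Group H] (f : G →* H) (hf : Function.Surjective f) (k : ℕ) :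
    Subgroup.map f (Subgroup.lowerCentralSeries (⊤ : Subgroup G) k) = Subgroup.lowerCentralSeries (⊤ : Subgroup H) k := by
  induction k with
  | zero => simpa using map_top_of_surjective f hf
  | succ k ih =>
    show Subgroup.map f ⁅Subgroup.lowerCentralSeries (⊤ : Subgroup G) k, ⊤⁆ = ⁅Subgroup.lowerCentralSeries (⊤ : Subgroup H) k, ⊤⁆
    rw [Subgroup.map_commutator, ih, map_top_of_surjective f hf]

end Helpers
/-- A group generated by `n` elements each of which commutes with all of its
conjugates is nilpotent of class at most `n`. -/
theorem milnor_lcs (n : ℕ) : ∀ {G : Type u} [Group G] (x : Fin n → G),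
    Subgroup.closure (Set.range x) = ⊤ →
    (∀ (i : Fin n) (y : G), x i * (y⁻¹ * x i * y) = (y⁻¹ * x i * y) * x i) →
    Subgroup.lowerCentralSeries (⊤ : Subgroup G) n = ⊥ := by
  induction n with
  | zero =>
    intro G _ x hgen _
    have hbot : (⊥ : Subgroup G) = ⊤ := by
      rw [← hgen, Set.range_eq_empty, Subgroup.closure_empty]
    rw [Subgroup.lowerCentralSeries_zero, ← hbot]
  | succ n ih =>
    intro G _ x hgen hcomm
    have key : ∀ i : Fin (n + 1),
        Subgroup.lowerCentralSeries (⊤ : Subgroup G) n ≤ Subgroup.normalClosure ({x i} : Set G) := by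
      intro i
      set A := Subgroup.normalClosure ({x i} : Set G) with hA
      let q : G →* G ⧸ A := QuotientGroup.mk' A
      have hsurj : Function.Surjective q := QuotientGroup.mk'_surjective A
      have hxi : q (x i) = 1 := by
        rw [← MonoidHom.mem_ker, QuotientGroup.ker_mk']
        exact subset_normalClosure rfl
      have hgen' : Subgroup.closure (Set.range fun j : Fin n => q (x (i.succAbove j))) = ⊤ := by
        rw [eq_top_iff]
        have h1 : Subgroup.map q ⊤ = ⊤ := map_top_of_surjective q hsurj
        rw [← h1, ← hgen, MonoidHom.map_closure]
        rw [Subgroup.closure_le]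
        rintro - ⟨-, ⟨j, rfl⟩, rfl⟩
        by_cases hj : j = i
        · subst hj; rw [hxi]; exact Subgroup.one_mem _
        · obtain ⟨j', rfl⟩ := Fin.exists_succAbove_eq hj
          exact subset_closure ⟨j', rfl⟩
      have hcomm' : ∀ (j : Fin n) (y : G ⧸ A),
          q (x (i.succAbove j)) * (y⁻¹ * q (x (i.succAbove j)) * y)
            = (y⁻¹ * q (x (i.succAbove j)) * y) * q (x (i.succAbove j)) := by
        intro j y
        obtain ⟨z, rfl⟩ := hsurj y
        have h := congrArg q (hcomm (i.succAbove j) z)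
        simpa only [map_mul, map_inv] using h
      have hbot := ih (fun j => q (x (i.succAbove j))) hgen' hcomm'
      have hmap : Subgroup.map q (Subgroup.lowerCentralSeries (⊤ : Subgroup G) n) = ⊥ := by
        rw [lcs_map_eq q hsurj]; exact hbot
      rw [Subgroup.map_eq_bot_iff, QuotientGroup.ker_mk'] at hmap
      exact hmap
    have hcent : Subgroup.lowerCentralSeries (⊤ : Subgroup G) n ≤ Subgroup.center G := by
      intro g hg
      rw [Subgroup.mem_center_iff]
      have hxg : ∀ i : Fin (n + 1), x i * g = g * x i := fun i =>
        normalClosure_singleton_comm (hcomm i) (x i) (subset_normalClosure rfl) g (key i hg)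
      have hle : Subgroup.closure (Set.range x) ≤ Subgroup.centralizer {g} := by
        rw [Subgroup.closure_le]
        rintro - ⟨i, rfl⟩
        rw [SetLike.mem_coe, Subgroup.mem_centralizer_iff]
        rintro h rfl
        exact (hxg i).symm
      intro z
      have hz : z ∈ Subgroup.centralizer {g} := hle (by rw [hgen]; exact Subgroup.mem_top z)
      exact (Subgroup.mem_centralizer_iff.mp hz g rfl).symm
    exact Subgroup.lowerCentralSeries_succ_eq_bot _ hcent
section CommWords

variable {G : Type u} [Group G]

/-- Iterated commutators of weight `k+1` in a generating set. -/
def commWords (S : Set G) : ℕ → Set G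
  | 0 => S
  | k + 1 => (fun p : G × G => ⁅p.1, p.2⁆) '' ((commWords S k) ×ˢ S)

lemma commWords_finite {S : Set G} (hS : S.Finite) : ∀ k, (commWords S k).Finite
  | 0 => hS
  | k + 1 => ((commWords_finite hS k).prod hS).image _

/-- If `G` is generated by `S` and `N` is the normal closure of `C`, then `⁅N, G⁆` is the
normal closure of the commutators of elements of `C` with elements of `S`. -/
lemma commutator_normalClosure_top {S C : Set G} (hS : Subgroup.closure S = ⊤) :
    ⁅Subgroup.normalClosure C, (⊤ : Subgroup G)⁆ =
      Subgroup.normalClosure ((fun p : G × G => ⁅p.1, p.2⁆) '' (C ×ˢ S)) := by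
  set T : Set G := (fun p : G × G => ⁅p.1, p.2⁆) '' (C ×ˢ S) with hT
  set N := Subgroup.normalClosure T with hN
  apply le_antisymm
  · let f : G →* G ⧸ N := QuotientGroup.mk' N
    have hsurj : Function.Surjective f := QuotientGroup.mk'_surjective N
    have hcentral : ∀ c ∈ C, f c ∈ Subgroup.center (G ⧸ N) := by
      intro c hc
      rw [Subgroup.mem_center_iff]
      have h1 : Subgroup.closure (f '' S) = ⊤ := by
        rw [← MonoidHom.map_closure, hS, map_top_of_surjective _ hsurj]
      have h2 : Subgroup.closure (f '' S) ≤ Subgroup.centralizer {f c} := by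
        rw [Subgroup.closure_le]
        rintro - ⟨s, hs, rfl⟩
        rw [SetLike.mem_coe, Subgroup.mem_centralizer_iff]
        rintro - rfl
        have hmem : ⁅c, s⁆ ∈ N := subset_normalClosure ⟨(c, s), ⟨hc, hs⟩, rfl⟩
        have hone : f ⁅c, s⁆ = 1 := by
          rw [← MonoidHom.mem_ker, QuotientGroup.ker_mk']; exact hmem
        rw [map_commutatorElement] at hone
        exact (commutatorElement_eq_one_iff_commute.mp hone).eq
      intro z
      have hz : z ∈ Subgroup.centralizer {f c} := h2 (by rw [h1]; exact Subgroup.mem_top z)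
      exact (Subgroup.mem_centralizer_iff.mp hz (f c) rfl).symm
    have hNC : ∀ g ∈ Subgroup.normalClosure C, f g ∈ Subgroup.center (G ⧸ N) := by
      intro g hg
      have hmap : Subgroup.map f (Subgroup.normalClosure C) ≤ Subgroup.center (G ⧸ N) := by
        rw [Subgroup.map_normalClosure _ _ hsurj]
        exact Subgroup.normalClosure_le_normal (by rintro - ⟨c, hc, rfl⟩; exact hcentral c hc)
      exact hmap (Subgroup.mem_map_of_mem f hg)
    rw [Subgroup.commutator_le]
    intro g hg z _
    have h3 : f ⁅g, z⁆ = 1 := by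
      rw [map_commutatorElement]
      exact commutatorElement_eq_one_iff_commute.mpr
        ((Subgroup.mem_center_iff.mp (hNC g hg) (f z)).symm)
    rw [← QuotientGroup.ker_mk' N]
    exact MonoidHom.mem_ker.mpr h3
  · apply Subgroup.normalClosure_le_normal
    rintro - ⟨⟨c, s⟩, ⟨hc, hs⟩, rfl⟩
    exact Subgroup.commutator_mem_commutator (subset_normalClosure hc) (Subgroup.mem_top s)

/-- For a group generated by `S`, the lower central series terms are normal closures of
iterated commutators of elements of `S`. -/
lemma lcs_eq_normalClosure {S : Set G} (hS : Subgroup.closure S = ⊤) (k : ℕ) :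
    Subgroup.lowerCentralSeries (⊤ : Subgroup G) k = Subgroup.normalClosure (commWords S k) := by
  induction k with
  | zero =>
    rw [Subgroup.lowerCentralSeries_zero, eq_comm, eq_top_iff, ← hS]
    exact Subgroup.closure_le_normalClosure
  | succ k ih =>
    show ⁅Subgroup.lowerCentralSeries (⊤ : Subgroup G) k, ⊤⁆ = _
    rw [ih, commutator_normalClosure_top hS]
    rfl

end CommWords
section Noetherian

variable {G : Type u} [Group G]

/-- Every subgroup of a finitely generated commutative group is finitely generated. -/
lemma comm_group_subgroup_fg {A : Type*} [CommGroup A] [Group.FG A] (B : Subgroup A) :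
    B.FG := by
  have h1 : AddGroup.FG (Additive A) := GroupFG.iff_add_fg.mp ‹_›
  have h2 : Module.Finite ℤ (Additive A) := Module.Finite.iff_addGroup_fg.mpr h1
  have h3 : IsNoetherian ℤ (Additive A) := isNoetherian_of_isNoetherianRing_of_finite ℤ _
  rw [Subgroup.fg_iff_add_fg]
  have h4 := IsNoetherian.noetherian (AddSubgroup.toIntSubmodule (Subgroup.toAddSubgroup B))
  rwa [Submodule.fg_iff_addSubgroup_fg, AddSubgroup.toIntSubmodule_toAddSubgroup] at h4

open scoped IsMulCommutative in
/-- A subgroup of a finitely generated central subgroup is finitely generated. -/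
lemma fg_of_le_center_fg {A B : Subgroup G} (hA : A ≤ Subgroup.center G) (hAfg : A.FG)
    (hBA : B ≤ A) : B.FG := by
  haveI : IsMulCommutative A :=
    ⟨⟨fun a b => Subtype.ext (Subgroup.mem_center_iff.mp (hA b.2) a.1)⟩⟩
  haveI hAgfg : Group.FG ↥A := (Group.fg_iff_subgroup_fg A).mpr hAfg
  have h1 : (B.subgroupOf A).FG := comm_group_subgroup_fg _
  obtain ⟨T, hT⟩ := h1
  have h2 : Subgroup.map A.subtype (B.subgroupOf A) = B := by
    rw [Subgroup.subgroupOf_map_subtype, inf_eq_left.mpr hBA]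
  rw [← h2, ← hT, MonoidHom.map_closure]
  exact (Subgroup.fg_iff _).mpr ⟨_, rfl, (T.finite_toSet).image _⟩

/-- A group with finitely generated kernel and range of a homomorphism is
finitely generated. -/
lemma fg_of_ker_range {Q : Type*} [Group Q] (φ : G →* Q) (h1 : φ.ker.FG)
    (h2 : φ.range.FG) : Group.FG G := by
  obtain ⟨K, hK, hKfin⟩ := (Subgroup.fg_iff _).mp h1
  obtain ⟨Rs, hRs, hRfin⟩ := (Subgroup.fg_iff _).mp h2
  have hlift : ∀ r : {r // r ∈ Rs}, ∃ g : G, φ g = r.1 := by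
    intro r
    have : r.1 ∈ φ.range := by rw [← hRs]; exact subset_closure r.2
    exact this
  choose lf hlf using hlift
  haveI := hRfin.to_subtype
  rw [Group.fg_iff]
  refine ⟨K ∪ Set.range lf, ?_, hKfin.union (Set.finite_range lf)⟩
  rw [eq_top_iff]
  rintro g -
  set C := Subgroup.closure (K ∪ Set.range lf) with hC
  have h5 : Subgroup.closure Rs ≤ Subgroup.map φ C := by
    rw [Subgroup.closure_le]
    intro r hr
    exact ⟨lf ⟨r, hr⟩, subset_closure (Or.inr ⟨⟨r, hr⟩, rfl⟩), hlf _⟩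
  have hg : φ g ∈ Subgroup.closure Rs := by rw [hRs]; exact ⟨g, rfl⟩
  obtain ⟨c, hc, hcg⟩ := h5 hg
  have hker : g * c⁻¹ ∈ φ.ker := by
    rw [MonoidHom.mem_ker, map_mul, map_inv, hcg]
    simp
  have hk : g * c⁻¹ ∈ C := by
    rw [← hK] at hker
    exact Subgroup.closure_mono Set.subset_union_left hker
  simpa using mul_mem hk hc

/-- Subgroups of finitely generated nilpotent groups are finitely generated. -/
theorem noeth (c : ℕ) : ∀ (G : Type u) [Group G], Group.FG G →
    Subgroup.lowerCentralSeries (⊤ : Subgroup G) c = ⊥ → ∀ H : Subgroup G, H.FG := by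
  induction c with
  | zero =>
    intro G _ hfg hbot H
    have hH : H = ⊥ := by
      rw [eq_bot_iff, ← hbot]
      exact le_top
    rw [hH]
    exact ⟨∅, by simp⟩
  | succ c ih =>
    intro G _ hfg hbot H
    set A := Subgroup.lowerCentralSeries (⊤ : Subgroup G) c with hA
    have hAcent : A ≤ Subgroup.center G := by
      intro a ha
      rw [Subgroup.mem_center_iff]
      intro z
      have hmem : ⁅a, z⁆ ∈ Subgroup.lowerCentralSeries (⊤ : Subgroup G) (c + 1) :=
        Subgroup.commutator_mem_commutator ha (Subgroup.mem_top z)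
      rw [hbot, Subgroup.mem_bot] at hmem
      exact (commutatorElement_eq_one_iff_commute.mp hmem).eq.symm
    obtain ⟨S, hSgen, hSfin⟩ := Group.fg_iff.mp hfg
    have hAeq : A = Subgroup.normalClosure (commWords S c) := lcs_eq_normalClosure hSgen c
    have hsub : commWords S c ⊆ Subgroup.center G := fun w hw =>
      hAcent (hAeq ▸ subset_normalClosure hw)
    have hclA : A = Subgroup.closure (commWords S c) := by
      rw [hAeq]
      apply le_antisymm
      · haveI : (Subgroup.closure (commWords S c)).Normal := by
          constructor
          intro g hg z
          have hgc : g ∈ Subgroup.center G :=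
            (Subgroup.closure_le _).mpr hsub hg
          have hzg : z * g * z⁻¹ = g := by
            rw [Subgroup.mem_center_iff.mp hgc z]
            simp [mul_assoc]
          rw [hzg]
          exact hg
        exact Subgroup.normalClosure_le_normal subset_closure
      · exact Subgroup.closure_le_normalClosure
    have hAfg : A.FG :=
      (Subgroup.fg_iff A).mpr ⟨_, hclA.symm, commWords_finite hSfin c⟩
    let φ : G →* G ⧸ A := QuotientGroup.mk' A
    have hsurj : Function.Surjective φ := QuotientGroup.mk'_surjective A
    haveI : Group.FG G := hfg
    have hQfg : Group.FG (G ⧸ A) := Group.fg_of_surjective hsurj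
    have hQlcs : Subgroup.lowerCentralSeries (⊤ : Subgroup (G ⧸ A)) c = ⊥ := by
      rw [← lcs_map_eq φ hsurj c, ← hA, Subgroup.map_eq_bot_iff, QuotientGroup.ker_mk']
    let ψ : ↥H →* G ⧸ A := φ.comp H.subtype
    have hkereq : ψ.ker = (A ⊓ H).subgroupOf H := by
      ext g
      simp only [MonoidHom.mem_ker, MonoidHom.comp_apply, Subgroup.mem_subgroupOf,
        Subgroup.mem_inf]
      constructor
      · intro hg
        refine ⟨?_, g.2⟩
        have : H.subtype g ∈ φ.ker := hg
        rwa [QuotientGroup.ker_mk'] at this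
      · intro hg
        show φ (H.subtype g) = 1
        rw [← MonoidHom.mem_ker, QuotientGroup.ker_mk']
        exact hg.1
    have hBfg : (A ⊓ H).FG := fg_of_le_center_fg hAcent hAfg inf_le_left
    have hkerfg : ψ.ker.FG := by
      rw [hkereq]
      haveI : Group.FG ↥(A ⊓ H) := (Group.fg_iff_subgroup_fg _).mpr hBfg
      have := Group.fg_of_surjective
        (f := ((Subgroup.subgroupOfEquivOfLe (inf_le_right : A ⊓ H ≤ H)).symm.toMonoidHom))
        (Subgroup.subgroupOfEquivOfLe _).symm.surjective
      exact (Group.fg_iff_subgroup_fg _).mp this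
    have hrangefg : ψ.range.FG := by
      have hr : ψ.range = Subgroup.map φ H := by
        rw [MonoidHom.range_comp, Subgroup.range_subtype]
      rw [hr]
      exact ih (G ⧸ A) hQfg hQlcs _
    have : Group.FG ↥H := fg_of_ker_range ψ hkerfg hrangefg
    exact (Group.fg_iff_subgroup_fg H).mp this

end Noetherian
/-- The free Milnor group `MFₙ`, the quotient of the free group on `n` generators by
the normal closure of all `[xᵢ, xᵢ^y]`, is finitely presented and nilpotent of class
at most `n` (its `(n+1)`-st lower central series term is trivial). -/
theorem freeMilnorGroup_fp_nilpotent (n : ℕ) :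
    IsFinitelyPresented
      (FreeGroup (Fin n) ⧸ milnorRelators (FreeGroup.of : Fin n → FreeGroup (Fin n))) ∧
    Subgroup.lowerCentralSeries
      (⊤ : Subgroup (FreeGroup (Fin n) ⧸ milnorRelators (FreeGroup.of : Fin n → FreeGroup (Fin n))))
      n = ⊥ := by
  set F := FreeGroup (Fin n) with hF
  set x : Fin n → F := FreeGroup.of with hx
  set R := milnorRelators x with hRdef
  haveI hRnorm : R.Normal := Subgroup.normalClosure_normal
  let π : F →* F ⧸ R := QuotientGroup.mk' R
  have hπ : Function.Surjective π := QuotientGroup.mk'_surjective R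
  have hgenF : Subgroup.closure (Set.range x) = ⊤ := FreeGroup.closure_range_of (Fin n)
  have hcommQ : ∀ (i : Fin n) (y : F ⧸ R),
      π (x i) * (y⁻¹ * π (x i) * y) = (y⁻¹ * π (x i) * y) * π (x i) := by
    intro i y
    obtain ⟨z, rfl⟩ := hπ y
    have hrel : (x i)⁻¹ * (z⁻¹ * x i * z)⁻¹ * x i * (z⁻¹ * x i * z) ∈ R :=
      Subgroup.subset_normalClosure ⟨i, z, rfl⟩
    have h1 : π ((x i)⁻¹ * (z⁻¹ * x i * z)⁻¹ * x i * (z⁻¹ * x i * z)) = 1 := by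
      rw [← MonoidHom.mem_ker, QuotientGroup.ker_mk']; exact hrel
    have h2 : (π (x i))⁻¹ * ((π z)⁻¹ * π (x i) * π z)⁻¹ * π (x i)
        * ((π z)⁻¹ * π (x i) * π z) = 1 := by
      simpa only [map_mul, map_inv] using h1
    exact mul_comm_of_relator h2
  have hgenQ : Subgroup.closure (Set.range fun i => π (x i)) = ⊤ := by
    rw [eq_top_iff, ← map_top_of_surjective π hπ, ← hgenF, MonoidHom.map_closure,
      Subgroup.closure_le]
    rintro - ⟨-, ⟨i, rfl⟩, rfl⟩
    exact subset_closure ⟨i, rfl⟩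
  have hnil : Subgroup.lowerCentralSeries (⊤ : Subgroup (F ⧸ R)) n = ⊥ := milnor_lcs n (fun i => π (x i)) hgenQ hcommQ
  refine ⟨?_, hnil⟩
  -- finite presentation
  have hΓR : Subgroup.lowerCentralSeries (⊤ : Subgroup F) n ≤ R := by
    have h := lcs_map_eq π hπ n
    rw [hnil, Subgroup.map_eq_bot_iff, QuotientGroup.ker_mk'] at h
    exact h
  set W := commWords (Set.range x) n with hW
  have hWfin : W.Finite := commWords_finite (Set.finite_range x) n
  have hΓeq : Subgroup.lowerCentralSeries (⊤ : Subgroup F) n = Subgroup.normalClosure W := lcs_eq_normalClosure hgenF n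
  set Γ := Subgroup.lowerCentralSeries (⊤ : Subgroup F) n with hΓ
  let μ : F →* F ⧸ Γ := QuotientGroup.mk' Γ
  have hμ : Function.Surjective μ := QuotientGroup.mk'_surjective Γ
  have hFfg : Group.FG F := Group.fg_iff.mpr ⟨Set.range x, hgenF, Set.finite_range x⟩
  haveI := hFfg
  have hQ'fg : Group.FG (F ⧸ Γ) := Group.fg_of_surjective hμ
  have hQ'lcs : Subgroup.lowerCentralSeries (⊤ : Subgroup (F ⧸ Γ)) n = ⊥ := by
    rw [← lcs_map_eq μ hμ n, ← hΓ, Subgroup.map_eq_bot_iff, QuotientGroup.ker_mk']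
  have hRbarfg : (Subgroup.map μ R).FG := noeth n (F ⧸ Γ) hQ'fg hQ'lcs _
  obtain ⟨Tb, hTb, hTbfin⟩ := (Subgroup.fg_iff _).mp hRbarfg
  have hlift : ∀ t : {t // t ∈ Tb}, ∃ r, r ∈ R ∧ μ r = t.1 := by
    intro t
    have ht : t.1 ∈ Subgroup.map μ R := by rw [← hTb]; exact subset_closure t.2
    obtain ⟨r, hr, hrt⟩ := ht
    exact ⟨r, hr, hrt⟩
  choose lift hliftR hliftμ using hlift
  haveI := hTbfin.to_subtype
  set T := Set.range lift with hTdef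
  have hRfin : R = Subgroup.normalClosure (W ∪ T) := by
    apply le_antisymm
    · set N := Subgroup.normalClosure (W ∪ T) with hNd
      have hΓN : Γ ≤ N := by
        rw [hΓeq]
        exact Subgroup.normalClosure_mono Set.subset_union_left
      intro r hr
      have h1 : μ r ∈ Subgroup.closure Tb := by
        rw [hTb]; exact Subgroup.mem_map_of_mem μ hr
      have h2 : Subgroup.closure Tb ≤ Subgroup.map μ N := by
        rw [Subgroup.closure_le]
        intro t ht
        exact ⟨lift ⟨t, ht⟩, Subgroup.subset_normalClosure (Or.inr ⟨⟨t, ht⟩, rfl⟩), hliftμ _⟩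
      obtain ⟨m, hm, hmr⟩ := h2 h1
      have h3 : r * m⁻¹ ∈ Γ := by
        have hone : μ (r * m⁻¹) = 1 := by rw [map_mul, map_inv, hmr]; simp
        have : r * m⁻¹ ∈ (QuotientGroup.mk' Γ).ker := MonoidHom.mem_ker.mpr hone
        rwa [QuotientGroup.ker_mk'] at this
      have hfin := mul_mem (hΓN h3) hm
      simpa using hfin
    · apply Subgroup.normalClosure_le_normal
      rintro w (hw | hw)
      · exact hΓR (hΓeq ▸ Subgroup.subset_normalClosure hw)
      · obtain ⟨t, rfl⟩ := hw
        exact hliftR t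
  have hUfin : (W ∪ T).Finite := hWfin.union (Set.finite_range lift)
  refine ⟨n, hUfin.toFinset, ⟨?_⟩⟩
  exact QuotientGroup.quotientMulEquivOfEq (by rw [hUfin.coe_toFinset, ← hRfin])
end

section
/- Let MF_2 be the Milnor group of the free group on two generators x_1, x_2. Then MF_2 is nilpotent of class at most 2, hence the commutator subgroup of MF_2 is central. -/
namespace MilnorAux2

open commutatorElement

abbrev G2 : Type := FreeGroup (Fin 2) ⧸ milnorRelators (FreeGroup.of : Fin 2 → FreeGroup (Fin 2))

def gen (i : Fin 2) : G2 := QuotientGroup.mk (FreeGroup.of i)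

lemma rel (i : Fin 2) (y : G2) : Commute (gen i) (y⁻¹ * gen i * y) := by
  obtain ⟨z, rfl⟩ := QuotientGroup.mk_surjective y
  have h : ((FreeGroup.of i)⁻¹ * (z⁻¹ * FreeGroup.of i * z)⁻¹ * FreeGroup.of i *
      (z⁻¹ * FreeGroup.of i * z)) ∈
      milnorRelators (FreeGroup.of : Fin 2 → FreeGroup (Fin 2)) :=
    Subgroup.subset_normalClosure ⟨i, z, rfl⟩
  have h1 : (QuotientGroup.mk ((FreeGroup.of i)⁻¹ * (z⁻¹ * FreeGroup.of i * z)⁻¹ *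
      FreeGroup.of i * (z⁻¹ * FreeGroup.of i * z)) : G2) = 1 :=
    (QuotientGroup.eq_one_iff _).2 h
  simp only [QuotientGroup.mk_mul, QuotientGroup.mk_inv] at h1
  set a : G2 := gen i
  set w : G2 := (QuotientGroup.mk z : G2)⁻¹ * a * (QuotientGroup.mk z : G2) with hw
  have h2 : a⁻¹ * w⁻¹ * a * w = 1 := by rw [hw]; exact h1
  have h3 := congrArg (fun t => w * a * t) h2
  show a * w = w * a
  simpa [mul_assoc] using h3

lemma closure_top : Subgroup.closure (Set.range gen) = ⊤ := by
  have h : Set.range gen = (QuotientGroup.mk : FreeGroup (Fin 2) → G2) ''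
      Set.range (FreeGroup.of : Fin 2 → FreeGroup (Fin 2)) := by
    rw [← Set.range_comp]; rfl
  rw [h, ← QuotientGroup.coe_mk' (milnorRelators (FreeGroup.of : Fin 2 → FreeGroup (Fin 2))),
    ← MonoidHom.map_closure, FreeGroup.closure_range_of,
    Subgroup.map_top_of_surjective _ (QuotientGroup.mk'_surjective _)]

-- the commutator of the two generators
def c : G2 := ⁅gen 0, gen 1⁆

lemma comm_gen0_c : Commute (gen 0) c := by
  have h := rel 0 ((gen 1)⁻¹)
  simp only [inv_inv] at h
  -- h : Commute (gen 0) (gen 1 * gen 0 * (gen 1)⁻¹)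
  have hc : c = gen 0 * (gen 1 * gen 0 * (gen 1)⁻¹)⁻¹ := by
    show ⁅gen 0, gen 1⁆ = _
    rw [commutatorElement_def]; group
  rw [hc]
  exact (Commute.refl (gen 0)).mul_right h.inv_right

lemma comm_gen1_c : Commute (gen 1) c := by
  have h := rel 1 ((gen 0)⁻¹)
  simp only [inv_inv] at h
  -- h : Commute (gen 1) (gen 0 * gen 1 * (gen 0)⁻¹)
  have hc : c⁻¹ = gen 1 * (gen 0 * gen 1 * (gen 0)⁻¹)⁻¹ := by
    show ⁅gen 0, gen 1⁆⁻¹ = _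
    rw [commutatorElement_def]; group
  have : Commute (gen 1) c⁻¹ := by
    rw [hc]; exact (Commute.refl (gen 1)).mul_right h.inv_right
  simpa using this.inv_right

lemma c_mem_center : c ∈ Subgroup.center G2 := by
  rw [Subgroup.mem_center_iff]
  intro g
  have hg : g ∈ Subgroup.closure (Set.range gen) := closure_top ▸ Subgroup.mem_top g
  induction hg using Subgroup.closure_induction with
  | mem x hx =>
    obtain ⟨i, rfl⟩ := hx
    fin_cases i
    · simpa using comm_gen0_c.eq
    · simpa using comm_gen1_c.eq
  | one => simp
  | mul x y hx hy ihx ihy =>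
    calc x * y * c = x * (c * y) := by rw [mul_assoc, ihy]
    _ = c * (x * y) := by rw [← mul_assoc, ihx, mul_assoc]
  | inv x hx ih => exact Commute.inv_left ih

end MilnorAux2

namespace MilnorAux2

open commutatorElement

abbrev Z : Subgroup G2 := Subgroup.center G2

abbrev Q : Type := G2 ⧸ Z

lemma q_comm (x y : Q) : Commute x y := by
  have hclos : Subgroup.closure (Set.range fun i => (QuotientGroup.mk (gen i) : Q)) = ⊤ := by
    have h : (Set.range fun i => (QuotientGroup.mk (gen i) : Q)) =
        (QuotientGroup.mk : G2 → Q) '' Set.range gen := by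
      rw [← Set.range_comp]; rfl
    rw [h, ← QuotientGroup.coe_mk' Z, ← MonoidHom.map_closure, closure_top,
      Subgroup.map_top_of_surjective _ (QuotientGroup.mk'_surjective _)]
  have hx : x ∈ Subgroup.closure (Set.range fun i => (QuotientGroup.mk (gen i) : Q)) :=
    hclos ▸ Subgroup.mem_top x
  have hy : y ∈ Subgroup.closure (Set.range fun i => (QuotientGroup.mk (gen i) : Q)) :=
    hclos ▸ Subgroup.mem_top y
  induction hx, hy using Subgroup.closure_induction₂ with
  | mem a b ha hb =>
    obtain ⟨i, rfl⟩ := ha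
    obtain ⟨j, rfl⟩ := hb
    have key : ⁅gen i, gen j⁆ ∈ Z := by
      have h01 : (⁅gen 0, gen 1⁆ : G2) ∈ Z := c_mem_center
      have h10 : (⁅gen 1, gen 0⁆ : G2) ∈ Z := by
        have := Z.inv_mem h01
        rwa [commutatorElement_inv] at this
      fin_cases i <;> fin_cases j
      · simpa [commutatorElement_def] using Z.one_mem
      · simpa using h01
      · simpa using h10
      · simpa [commutatorElement_def] using Z.one_mem
    have h1 : ((QuotientGroup.mk ⁅gen i, gen j⁆ : Q)) = 1 := (QuotientGroup.eq_one_iff _).2 key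
    rw [← commutatorElement_eq_one_iff_commute]
    simpa [commutatorElement_def] using h1
  | one_left x hx => exact (Commute.one_left x)
  | one_right x hx => exact (Commute.one_right x)
  | mul_left a b z ha hb hz h1 h2 => exact h1.mul_left h2
  | mul_right a b z ha hb hz h1 h2 => exact h1.mul_right h2
  | inv_left a b ha hb h => exact h.inv_left
  | inv_right a b ha hb h => exact h.inv_right

lemma comm_le_center : commutator G2 ≤ Subgroup.center G2 := by
  rw [commutator_def, Subgroup.commutator_le]
  intro g _ h _
  have : (QuotientGroup.mk ⁅g, h⁆ : Q) = 1 := by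
    rw [← QuotientGroup.coe_mk' Z, map_commutatorElement,
      commutatorElement_eq_one_iff_commute]
    exact q_comm _ _
  exact (QuotientGroup.eq_one_iff _).1 this

end MilnorAux2


/-- The Milnor group `MF₂` of the free group on two generators is nilpotent of class
at most `2` (the third term of its lower central series is trivial), hence its
commutator subgroup is central. -/
theorem freeMilnorGroupTwo_class_two :
    Subgroup.lowerCentralSeries
      (⊤ : Subgroup (FreeGroup (Fin 2) ⧸ milnorRelators (FreeGroup.of : Fin 2 → FreeGroup (Fin 2))))
      2 = ⊥ ∧
    commutator
      (FreeGroup (Fin 2) ⧸ milnorRelators (FreeGroup.of : Fin 2 → FreeGroup (Fin 2))) ≤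
    Subgroup.center
      (FreeGroup (Fin 2) ⧸ milnorRelators (FreeGroup.of : Fin 2 → FreeGroup (Fin 2))) := by
  refine ⟨?_, MilnorAux2.comm_le_center⟩
  exact Subgroup.lowerCentralSeries_succ_eq_bot _
    (by rw [Subgroup.top_lowerCentralSeries_one]; exact MilnorAux2.comm_le_center)
end

section
/- Let G be a group normally generated by x_1, ..., x_n with Milnor group MG, and let A be the intersection over i of the normal closures A_i of the x_i in MG. Then A is contained in the center of MG. -/
/-- In the Milnor group, `x i` commutes with all its conjugates. -/
lemma milnor_commute_base {G : Type*} [Group G] {n : ℕ} (x : Fin n → G) (i : Fin n)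
    (y : G) : Commute (QuotientGroup.mk (x i) : G ⧸ milnorRelators x)
      ((QuotientGroup.mk y)⁻¹ * QuotientGroup.mk (x i) * QuotientGroup.mk y) := by
  set p : G ⧸ milnorRelators x := QuotientGroup.mk (x i)
  set q : G ⧸ milnorRelators x := QuotientGroup.mk y
  have h : ((x i)⁻¹ * (y⁻¹ * x i * y)⁻¹ * x i * (y⁻¹ * x i * y) : G) ∈ milnorRelators x :=
    Subgroup.subset_normalClosure ⟨i, y, rfl⟩
  have h1 : p⁻¹ * (q⁻¹ * p * q)⁻¹ * p * (q⁻¹ * p * q) = 1 := by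
    have := (QuotientGroup.eq_one_iff _).2 h
    simpa [p, q, QuotientGroup.mk_mul, QuotientGroup.mk_inv] using this
  open scoped commutatorElement in
  have h2 : ⁅p⁻¹, (q⁻¹ * p * q)⁻¹⁆ = 1 := by
    rw [commutatorElement_def]; group at h1 ⊢; exact h1
  have := commutatorElement_eq_one_iff_commute.mp h2
  simpa using this.inv_inv

/-- Any two conjugates of `x i` commute in the Milnor group. -/
lemma milnor_commute_conj {G : Type*} [Group G] {n : ℕ} (x : Fin n → G) (i : Fin n)
    (c d : G ⧸ milnorRelators x) :
    Commute (c * QuotientGroup.mk (x i) * c⁻¹) (d * QuotientGroup.mk (x i) * d⁻¹) := by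
  set p : G ⧸ milnorRelators x := QuotientGroup.mk (x i)
  obtain ⟨w, hw⟩ := QuotientGroup.mk_surjective (c⁻¹ * d)
  have base' : Commute p ((QuotientGroup.mk w : G ⧸ milnorRelators x) * p *
      (QuotientGroup.mk w : G ⧸ milnorRelators x)⁻¹) := by
    simpa using milnor_commute_base x i w⁻¹
  have hmap := base'.map (MulAut.conj c).toMonoidHom
  have hc : ((MulAut.conj c).toMonoidHom p) = c * p * c⁻¹ := rfl
  have hd : ((MulAut.conj c).toMonoidHom ((QuotientGroup.mk w : G ⧸ milnorRelators x) * p *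
      (QuotientGroup.mk w : G ⧸ milnorRelators x)⁻¹)) = d * p * d⁻¹ := by
    simp only [MulEquiv.toMonoidHom_eq_coe, MonoidHom.coe_coe, MulAut.conj_apply, hw]
    group
  rw [hc, hd] at hmap
  exact hmap

/-- Let `G` be normally generated by `x₁, …, xₙ` with Milnor group `MG`, and let `A` be
the intersection of the normal closures `Aᵢ` of the images of the `xᵢ` in `MG`. Then
`A` is contained in the center of `MG`. -/
theorem milnorGroup_inf_normalClosures_central {G : Type*} [Group G] {n : ℕ}
    (x : Fin n → G) (hgen : Subgroup.normalClosure (Set.range x) = ⊤) :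
    (⨅ i : Fin n, Subgroup.normalClosure
        ({QuotientGroup.mk (x i)} : Set (G ⧸ milnorRelators x))) ≤
      Subgroup.center (G ⧸ milnorRelators x) := by
  intro a ha
  rw [Subgroup.mem_center_iff]
  intro g
  -- every element of the quotient lies in the normal closure of the images of the `x i`
  have htop : Subgroup.normalClosure
      (Set.range fun i => (QuotientGroup.mk (x i) : G ⧸ milnorRelators x)) = ⊤ := by
    have hmap := Subgroup.map_normalClosure (Set.range x)
      (QuotientGroup.mk' (milnorRelators x)) (QuotientGroup.mk'_surjective _)
    rw [hgen, Subgroup.map_top_of_surjective _ (QuotientGroup.mk'_surjective _)] at hmap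
    rw [hmap, ← Set.range_comp]
    rfl
  have hg : g ∈ Subgroup.closure (Group.conjugatesOfSet
      (Set.range fun i => (QuotientGroup.mk (x i) : G ⧸ milnorRelators x))) := by
    rw [← Subgroup.normalClosure, htop]; trivial
  -- it suffices that `a` commutes with each conjugate of each `x i`
  suffices hcomm : Commute a g by exact hcomm.eq.symm
  refine Subgroup.closure_induction (fun c hc => ?_) (Commute.one_right a)
    (fun u v _ _ h1 h2 => h1.mul_right h2) (fun u _ h1 => h1.inv_right) hg
  obtain ⟨b, ⟨i, rfl⟩, hconj⟩ := Group.mem_conjugatesOfSet_iff.mp hc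
  obtain ⟨u, hu⟩ := isConj_iff.mp hconj
  subst hu
  -- `a` lies in the normal closure of `x i`, whose generators all commute with `u (x i) u⁻¹`
  have hai : a ∈ Subgroup.closure (Group.conjugatesOfSet
      ({QuotientGroup.mk (x i)} : Set (G ⧸ milnorRelators x))) := Subgroup.mem_iInf.mp ha i
  refine Subgroup.closure_induction (fun b hb => ?_) (Commute.one_left _)
    (fun s t _ _ h1 h2 => h1.mul_left h2) (fun s _ h1 => h1.inv_left) hai
  obtain ⟨p, hp, hconj'⟩ := Group.mem_conjugatesOfSet_iff.mp hb
  obtain ⟨v, hv⟩ := isConj_iff.mp hconj'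
  rw [Set.mem_singleton_iff] at hp
  subst hp hv
  exact milnor_commute_conj x i v u
end

section
/- Let G be a group in which the elements [x_i, x_i^y] are trivial for normal generators x_1,...,x_n and all y (i.e., G is its own Milnor group). If g ∈ G_n (the n-th term of the lower central series) then g lies in the normal closure of x_i for every i. -/
open Subgroup

/-- Elements of the closure of a set of pairwise-commuting elements commute. -/
lemma milnor_commute_closure {G : Type*} [Group G] {s : Set G}
    (hs : ∀ a ∈ s, ∀ b ∈ s, Commute a b) :
    ∀ a ∈ Subgroup.closure s, ∀ b ∈ Subgroup.closure s, Commute a b := by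
  intro a ha b hb
  refine Subgroup.closure_induction₂ (p := fun a b _ _ => Commute a b)
    (fun a b ha hb => hs a ha b hb)
    (fun x _ => Commute.one_left x) (fun x _ => Commute.one_right x)
    (fun x y z _ _ _ h1 h2 => h1.mul_left h2)
    (fun y z x _ _ _ h1 h2 => h1.mul_right h2)
    (fun x y _ _ h => h.inv_left)
    (fun x y _ _ h => h.inv_right) ha hb

/-- Under the Milnor relation, all conjugates of `t` commute with each other. -/
lemma milnor_conj_commute {G : Type*} [Group G] {t : G}
    (hrel : ∀ y : G, t⁻¹ * (y⁻¹ * t * y)⁻¹ * t * (y⁻¹ * t * y) = 1) :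
    ∀ a ∈ Group.conjugatesOfSet ({t} : Set G), ∀ b ∈ Group.conjugatesOfSet ({t} : Set G),
      Commute a b := by
  have hc : ∀ y : G, Commute t (y⁻¹ * t * y) := by
    intro y
    have h := hrel y
    have h2 := congrArg (fun z => (y⁻¹ * t * y) * t * z) h
    show t * (y⁻¹ * t * y) = (y⁻¹ * t * y) * t
    simpa [mul_assoc] using h2
  intro a ha b hb
  rw [Group.mem_conjugatesOfSet_iff] at ha hb
  simp only [Set.mem_singleton_iff, exists_eq_left] at ha hb
  obtain ⟨u, rfl⟩ := isConj_iff.mp ha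
  obtain ⟨v, rfl⟩ := isConj_iff.mp hb
  have key := (hc (v⁻¹ * u)).map ((MulAut.conj u).toMonoidHom)
  rw [show ((MulAut.conj u).toMonoidHom : G →* G) t = u * t * u⁻¹ from rfl,
    show ((MulAut.conj u).toMonoidHom : G →* G) ((v⁻¹ * u)⁻¹ * t * (v⁻¹ * u)) = v * t * v⁻¹
      from by simp [MulAut.conj_apply]; group] at key
  exact key

/-- The key step: quotienting by the normal closure of `x i` yields a Milnor group on
`m` normal generators; if all such groups have `lowerCentralSeries _ m = ⊥`, then
`lowerCentralSeries G m` lands in the normal closure of `x i`. -/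
lemma milnor_step {G : Type u} [Group G] {m : ℕ} (x : Fin (m + 1) → G)
    (hgen : Subgroup.normalClosure (Set.range x) = ⊤)
    (hrel : ∀ (i : Fin (m + 1)) (y : G),
      (x i)⁻¹ * (y⁻¹ * x i * y)⁻¹ * x i * (y⁻¹ * x i * y) = 1)
    (hnil : ∀ {H : Type u} [Group H] (z : Fin m → H),
      Subgroup.normalClosure (Set.range z) = ⊤ →
      (∀ (j : Fin m) (y : H),
        (z j)⁻¹ * (y⁻¹ * z j * y)⁻¹ * z j * (y⁻¹ * z j * y) = 1) →
      (⊤ : Subgroup H).lowerCentralSeries m = ⊥)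
    (i : Fin (m + 1)) :
    (⊤ : Subgroup G).lowerCentralSeries m ≤ Subgroup.normalClosure {x i} := by
  set A := Subgroup.normalClosure ({x i} : Set G) with hA
  let π : G →* G ⧸ A := QuotientGroup.mk' A
  have hπ : Function.Surjective π := QuotientGroup.mk'_surjective A
  set x' : Fin m → G ⧸ A := fun j => π (x (i.succAbove j)) with hx'
  have hgen' : Subgroup.normalClosure (Set.range x') = ⊤ := by
    have h1 : Subgroup.normalClosure (π '' Set.range x) = ⊤ := by
      rw [← Subgroup.map_normalClosure _ _ hπ, hgen]
      exact Subgroup.map_top_of_surjective π hπ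
    refine top_le_iff.mp ?_
    rw [← h1]
    refine Subgroup.normalClosure_le_normal ?_
    rintro _ ⟨_, ⟨j, rfl⟩, rfl⟩
    by_cases hj : j = i
    · subst hj
      have : π (x j) = 1 := by
        rw [QuotientGroup.mk'_apply, QuotientGroup.eq_one_iff]
        exact Subgroup.subset_normalClosure rfl
      rw [this]
      exact one_mem _
    · obtain ⟨k, hk⟩ := Fin.exists_succAbove_eq hj
      exact Subgroup.subset_normalClosure ⟨k, by rw [hx']; simp [hk]⟩
  have hrel' : ∀ (j : Fin m) (y : G ⧸ A),
      (x' j)⁻¹ * (y⁻¹ * x' j * y)⁻¹ * x' j * (y⁻¹ * x' j * y) = 1 := by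
    intro j y'
    obtain ⟨y, rfl⟩ := hπ y'
    have := congrArg π (hrel (i.succAbove j) y)
    simpa only [map_mul, map_inv, map_one, hx'] using this
  have hq : (⊤ : Subgroup (G ⧸ A)).lowerCentralSeries m = ⊥ := hnil x' hgen' hrel'
  intro g hg
  have h2 : π g ∈ (⊤ : Subgroup (G ⧸ A)).lowerCentralSeries m :=
    lowerCentralSeries.map π m ⟨g, hg, rfl⟩
  rw [hq, Subgroup.mem_bot] at h2
  exact (QuotientGroup.eq_one_iff g).mp h2

/-- A Milnor group on `n` normal generators is nilpotent of class at most `n`. -/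
lemma milnor_nilpotent : ∀ (n : ℕ) {G : Type u} [Group G] (x : Fin n → G),
    Subgroup.normalClosure (Set.range x) = ⊤ →
    (∀ (i : Fin n) (y : G),
      (x i)⁻¹ * (y⁻¹ * x i * y)⁻¹ * x i * (y⁻¹ * x i * y) = 1) →
    (⊤ : Subgroup G).lowerCentralSeries n = ⊥ := by
  intro n
  induction n with
  | zero =>
    intro G _ x hgen hrel
    have hr : Set.range x = ∅ := Set.range_eq_empty x
    rw [hr] at hgen
    have hbot : (⊥ : Subgroup G) = ⊤ := by
      rw [← hgen]
      simp [Subgroup.normalClosure, Group.conjugatesOfSet]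
    have : (⊤ : Subgroup G).lowerCentralSeries 0 = ⊤ := rfl
    rw [this, ← hbot]
  | succ n ih =>
    intro G _ x hgen hrel
    have step1 : ∀ i : Fin (n + 1),
        (⊤ : Subgroup G).lowerCentralSeries n ≤ Subgroup.normalClosure {x i} :=
      milnor_step x hgen hrel (fun z hg hr => ih z hg hr)
    have habel : ∀ i : Fin (n + 1), ∀ a ∈ Subgroup.normalClosure ({x i} : Set G),
        ∀ b ∈ Subgroup.normalClosure ({x i} : Set G), Commute a b :=
      fun i => milnor_commute_closure (milnor_conj_commute (hrel i))
    refine eq_bot_iff.mpr ?_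
    have hsucc : (⊤ : Subgroup G).lowerCentralSeries (n + 1) = ⁅(⊤ : Subgroup G).lowerCentralSeries n, ⊤⁆ := rfl
    rw [hsucc]
    refine Subgroup.commutator_le.mpr ?_
    intro g hg y _
    rw [Subgroup.mem_bot, commutatorElement_eq_one_iff_commute]
    have hy : y ∈ Subgroup.closure (Group.conjugatesOfSet (Set.range x)) := by
      have : y ∈ Subgroup.normalClosure (Set.range x) := by rw [hgen]; trivial
      exact this
    refine Subgroup.closure_induction (p := fun y _ => Commute g y) ?_
      (Commute.one_right g) (fun a b _ _ h1 h2 => h1.mul_right h2)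
      (fun a _ h => h.inv_right) hy
    intro c hc
    rw [Group.mem_conjugatesOfSet_iff] at hc
    obtain ⟨a, ⟨j, rfl⟩, hconj⟩ := hc
    have hcA : c ∈ Subgroup.normalClosure ({x j} : Set G) :=
      Subgroup.conjugatesOfSet_subset_normalClosure
        (Group.mem_conjugatesOfSet_iff.mpr ⟨x j, rfl, hconj⟩)
    exact habel j g (step1 j hg) c hcA

/-- Let `G` be normally generated by `x₁, …, xₙ` in which all the Milnor relations
`[xᵢ, xᵢ^y] = 1` hold (i.e. `G` is its own Milnor group). Then every element of the
`n`-th term `G_n` of the lower central series (paper indexing `G₁ = G`; here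
`lowerCentralSeries G (n-1)`) lies in the normal closure of each `xᵢ`. -/
theorem milnor_inductive_step {G : Type*} [Group G] {n : ℕ} (x : Fin n → G)
    (hgen : Subgroup.normalClosure (Set.range x) = ⊤)
    (hrel : ∀ (i : Fin n) (y : G),
      (x i)⁻¹ * (y⁻¹ * x i * y)⁻¹ * x i * (y⁻¹ * x i * y) = 1) :
    ∀ g ∈ (⊤ : Subgroup G).lowerCentralSeries (n - 1), ∀ i : Fin n,
      g ∈ Subgroup.normalClosure {x i} := by
  intro g hg i
  cases n with
  | zero => exact i.elim0
  | succ m =>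
    simp only [Nat.add_sub_cancel] at hg
    exact milnor_step x hgen hrel (fun z hgen' hrel' => milnor_nilpotent m z hgen' hrel') i hg
end

section
/- A central extension of a finitely presented group by a finitely generated abelian group is finitely presented: if 1 → A → G → Q → 1 is exact with A central in G, A finitely generated, and Q finitely presented, then G is finitely presented. -/
open Subgroup
open scoped commutatorElement

/-- Transport a finite presentation over an arbitrary finite index type to `Fin n`. -/
lemma isFinitelyPresented_of_fintype {G : Type*} [Group G] {ι : Type} [Fintype ι]
    (S : Finset (FreeGroup ι))
    (h : Nonempty (G ≃* FreeGroup ι ⧸ Subgroup.normalClosure (S : Set (FreeGroup ι)))) :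
    (∃ (m : ℕ) (S' : Finset (FreeGroup (Fin m))),
      Nonempty (G ≃* FreeGroup (Fin m) ⧸
        Subgroup.normalClosure (S' : Set (FreeGroup (Fin m))))) := by
  classical
  obtain ⟨e⟩ := h
  set n := Fintype.card ι
  let f : FreeGroup ι ≃* FreeGroup (Fin n) := FreeGroup.freeGroupCongr (Fintype.equivFin ι)
  refine ⟨n, S.image f, ⟨e.trans (QuotientGroup.congr _ _ f ?_)⟩⟩
  have hsurj : Function.Surjective ⇑(f : FreeGroup ι →* FreeGroup (Fin n)) := f.surjective
  simpa [Finset.coe_image] using Subgroup.map_normalClosure (S : Set (FreeGroup ι))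
    (f : FreeGroup ι →* FreeGroup (Fin n)) hsurj

/-- If a generating set consists of elements commuting with `x`, then `x` is central. -/
lemma commute_all_of_gen {H : Type*} [Group H] {s : Set H}
    (hs : Subgroup.closure s = ⊤) {x : H} (hx : ∀ y ∈ s, Commute x y) :
    ∀ h : H, Commute x h := by
  intro h
  have hh : h ∈ Subgroup.closure s := by rw [hs]; trivial
  induction hh using Subgroup.closure_induction with
  | mem y hy => exact hx y hy
  | one => exact Commute.one_right x
  | mul a b _ _ ha hb => exact ha.mul_right hb
  | inv a _ ha => exact ha.inv_right

lemma closure_range_comp_of {α : Type*} {H : Type*} [Group H] (f : FreeGroup α →* H)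
    (hf : Function.Surjective f) :
    Subgroup.closure (Set.range fun a => f (FreeGroup.of a)) = ⊤ := by
  have h1 := Subgroup.map_top_of_surjective f hf
  rw [← FreeGroup.closure_range_of α, MonoidHom.map_closure, ← Set.range_comp] at h1
  exact h1

lemma ker_exponent_le_normalClosure {k : ℕ} :
    (FreeGroup.lift (fun i : Fin k => Multiplicative.ofAdd (Pi.single i (1:ℤ)))).ker ≤
      Subgroup.normalClosure
        {w : FreeGroup (Fin k) | ∃ i j : Fin k, w = ⁅FreeGroup.of i, FreeGroup.of j⁆} := by
  classical
  set μ := FreeGroup.lift (fun i : Fin k => Multiplicative.ofAdd (Pi.single i (1:ℤ))) with hμdef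
  set C : Set (FreeGroup (Fin k)) :=
    {w | ∃ i j : Fin k, w = ⁅FreeGroup.of i, FreeGroup.of j⁆} with hCdef
  set N := Subgroup.normalClosure C with hNdef
  set q := QuotientGroup.mk' N with hqdef
  have hgen : Subgroup.closure (Set.range fun i : Fin k => q (FreeGroup.of i)) = ⊤ :=
    closure_range_comp_of q (QuotientGroup.mk'_surjective N)
  have hcommgen : ∀ i j : Fin k, Commute (q (FreeGroup.of i)) (q (FreeGroup.of j)) := by
    intro i j
    have h1 : q ⁅FreeGroup.of i, FreeGroup.of j⁆ = 1 :=
      (QuotientGroup.eq_one_iff _).2 (Subgroup.subset_normalClosure ⟨i, j, rfl⟩)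
    rw [map_commutatorElement] at h1
    exact commutatorElement_eq_one_iff_commute.mp h1
  have hcomm : ∀ x y : FreeGroup (Fin k) ⧸ N, Commute x y := by
    have h1 : ∀ z ∈ (Set.range fun i : Fin k => q (FreeGroup.of i)), ∀ h, Commute z h := by
      rintro z ⟨i, rfl⟩
      exact commute_all_of_gen hgen (by rintro y ⟨j, rfl⟩; exact hcommgen i j)
    intro x y
    exact (commute_all_of_gen hgen fun z hz => (h1 z hz x).symm) y
  letI : CommGroup (FreeGroup (Fin k) ⧸ N) :=
    { (inferInstance : Group (FreeGroup (Fin k) ⧸ N)) with mul_comm := fun a b => hcomm a b }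
  let χ : Multiplicative (Fin k → ℤ) →* FreeGroup (Fin k) ⧸ N :=
    { toFun := fun y => ∏ i : Fin k, (q (FreeGroup.of i)) ^ (Multiplicative.toAdd y i)
      map_one' := by simp
      map_mul' := by intro y z; simp [zpow_add, Finset.prod_mul_distrib] }
  have hfactor : χ.comp μ = q := by
    apply FreeGroup.ext_hom
    intro i
    show ∏ j : Fin k, (q (FreeGroup.of j)) ^ (Multiplicative.toAdd (μ (FreeGroup.of i)) j)
        = q (FreeGroup.of i)
    rw [hμdef, FreeGroup.lift_apply_of]
    rw [Fintype.prod_eq_single i (fun j hj => by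
      simp [Pi.single_eq_of_ne hj])]
    simp
  intro w hw
  have h2 : q w = 1 := by
    have := congrArg (fun f : FreeGroup (Fin k) →* FreeGroup (Fin k) ⧸ N => f w) hfactor
    simp only [MonoidHom.comp_apply] at this
    rw [← this, MonoidHom.mem_ker.1 hw, map_one]
  exact (QuotientGroup.eq_one_iff _).1 h2

lemma exists_finset_rel {G : Type*} [Group G] {k : ℕ} (a : Fin k → G) :
    ∃ T : Finset (FreeGroup (Fin k)),
      (∀ u ∈ T, FreeGroup.lift a u = 1) ∧
      (FreeGroup.lift a).ker ≤ Subgroup.normalClosure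
        ((T : Set (FreeGroup (Fin k))) ∪
          {w | ∃ i j : Fin k, w = ⁅FreeGroup.of i, FreeGroup.of j⁆}) := by
  classical
  set π := FreeGroup.lift a with hπdef
  set μ := FreeGroup.lift (fun i : Fin k => Multiplicative.ofAdd (Pi.single i (1:ℤ))) with hμdef
  set K : Subgroup (Multiplicative (Fin k → ℤ)) := Subgroup.map μ π.ker with hKdef
  -- K is finitely generated (ℤ^k is Noetherian)
  have hKfg : K.FG := by
    have h1 : (AddSubgroup.toIntSubmodule (Subgroup.toAddSubgroup' K)).FG :=
      IsNoetherian.noetherian _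
    have h2 : (Subgroup.toAddSubgroup' K).FG := by
      rw [← AddSubgroup.toIntSubmodule_toAddSubgroup (Subgroup.toAddSubgroup' K)]
      exact (Submodule.fg_iff_addSubgroup_fg _).1 h1
    have h3 := (AddSubgroup.fg_iff_mul_fg (Subgroup.toAddSubgroup' K)).1 h2
    simpa using h3
  obtain ⟨s, hs⟩ := hKfg
  -- choose preimages in the kernel of π for each generator
  have hU : ∀ y : Multiplicative (Fin k → ℤ), ∃ u : FreeGroup (Fin k),
      y ∈ K → (u ∈ π.ker ∧ μ u = y) := by
    intro y
    by_cases hy : y ∈ K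
    · obtain ⟨u, hu1, hu2⟩ := hy
      exact ⟨u, fun _ => ⟨hu1, hu2⟩⟩
    · exact ⟨1, fun h => absurd h hy⟩
  choose U hU using hU
  refine ⟨s.image U, ?_, ?_⟩
  · intro u hu
    obtain ⟨y, hy, rfl⟩ := Finset.mem_image.1 hu
    have hyK : y ∈ K := hs ▸ Subgroup.subset_closure hy
    exact (hU y hyK).1
  · intro w hw
    set T : Finset (FreeGroup (Fin k)) := s.image U
    set C : Set (FreeGroup (Fin k)) :=
      {w | ∃ i j : Fin k, w = ⁅FreeGroup.of i, FreeGroup.of j⁆}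
    -- decompose μ w using the generators of K
    have hmem : μ w ∈ Subgroup.closure (s : Set (Multiplicative (Fin k → ℤ))) := by
      rw [hs]; exact ⟨w, hw, rfl⟩
    have hdec : ∃ v : FreeGroup (Fin k),
        v ∈ π.ker ∧ v ∈ Subgroup.closure (T : Set (FreeGroup (Fin k))) ∧ μ v = μ w := by
      refine Subgroup.closure_induction
        (p := fun y _ => ∃ v : FreeGroup (Fin k),
          v ∈ π.ker ∧ v ∈ Subgroup.closure (T : Set (FreeGroup (Fin k))) ∧ μ v = y)
        ?_ ?_ ?_ ?_ hmem
      · intro y hy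
        have hyK : y ∈ K := hs ▸ Subgroup.subset_closure hy
        exact ⟨U y, (hU y hyK).1, Subgroup.subset_closure
          (Finset.mem_coe.2 (Finset.mem_image_of_mem U hy)), (hU y hyK).2⟩
      · exact ⟨1, one_mem _, one_mem _, map_one μ⟩
      · rintro x y _ _ ⟨v1, h11, h12, h13⟩ ⟨v2, h21, h22, h23⟩
        exact ⟨v1 * v2, mul_mem h11 h21, mul_mem h12 h22, by rw [map_mul, h13, h23]⟩
      · rintro x _ ⟨v1, h11, h12, h13⟩
        exact ⟨v1⁻¹, inv_mem h11, inv_mem h12, by rw [map_inv, h13]⟩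
    obtain ⟨v, hv1, hv2, hv3⟩ := hdec
    have hker : w * v⁻¹ ∈ μ.ker := by
      rw [MonoidHom.mem_ker, map_mul, map_inv, hv3, mul_inv_cancel]
    have h1 : w * v⁻¹ ∈ Subgroup.normalClosure ((T : Set (FreeGroup (Fin k))) ∪ C) := by
      refine Subgroup.normalClosure_mono (Set.subset_union_right) ?_
      exact ker_exponent_le_normalClosure hker
    have h2 : v ∈ Subgroup.normalClosure ((T : Set (FreeGroup (Fin k))) ∪ C) := by
      refine (Subgroup.closure_le _).2 ?_ hv2
      exact Set.Subset.trans Set.subset_union_left Subgroup.subset_normalClosure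
    have : w = (w * v⁻¹) * v := by group
    rw [this]
    exact mul_mem h1 h2


/-- A central extension of a finitely presented group by a finitely generated abelian
group is finitely presented: if `A ≤ Z(G)` is finitely generated and `G/A` is finitely
presented, then `G` is finitely presented. -/
theorem central_extension_finitelyPresented {G : Type*} [Group G] (A : Subgroup G)
    [A.Normal] (hA : A ≤ Subgroup.center G) (hAfg : A.FG)
    (hQ : IsFinitelyPresented (G ⧸ A)) : IsFinitelyPresented G := by
  classical
  obtain ⟨m, S, ⟨e⟩⟩ := hQ
  obtain ⟨As, hAs⟩ := hAfg
  set k := As.card with hkdef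
  set a : Fin k → G := fun i => ((As.equivFin.symm i : As) : G) with hadef
  have haA : ∀ i, a i ∈ A := by
    intro i
    rw [← hAs]
    exact Subgroup.subset_closure (As.equivFin.symm i).2
  have hrangea : Set.range a = (As : Set G) := by
    ext x
    simp only [Set.mem_range]
    constructor
    · rintro ⟨i, rfl⟩; exact (As.equivFin.symm i).2
    · intro hx
      exact ⟨As.equivFin ⟨x, hx⟩, by simp [hadef]⟩
  have hclosa : Subgroup.closure (Set.range a) = A := by rw [hrangea, hAs]
  set mkS := QuotientGroup.mk' (Subgroup.normalClosure (S : Set (FreeGroup (Fin m)))) with hmkSdef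
  set mkA := QuotientGroup.mk' A with hmkAdef
  set x : Fin m → G := fun i => (e.symm (mkS (FreeGroup.of i))).out with hxdef
  have hx : ∀ i, mkA (x i) = e.symm (mkS (FreeGroup.of i)) := by
    intro i
    show QuotientGroup.mk _ = _
    rw [hxdef]
    exact QuotientGroup.out_eq' _
  set g : Fin m ⊕ Fin k → G := Sum.elim x a with hgdef
  set φ := FreeGroup.lift g with hφdef
  set π := FreeGroup.lift a with hπdef
  have hφinr : ∀ v : FreeGroup (Fin k), φ (FreeGroup.map Sum.inr v) = π v := by
    have h : φ.comp (FreeGroup.map Sum.inr) = π := by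
      apply FreeGroup.ext_hom
      intro i
      simp [hφdef, hπdef, hgdef]
    intro v
    have := congrArg (fun f : FreeGroup (Fin k) →* G => f v) h
    simpa using this
  have hψ : mkA.comp (φ.comp (FreeGroup.map Sum.inl)) =
      (e.symm : FreeGroup (Fin m) ⧸ Subgroup.normalClosure (S : Set (FreeGroup (Fin m))) ≃* G ⧸ A).toMonoidHom.comp mkS := by
    apply FreeGroup.ext_hom
    intro i
    simp only [MonoidHom.comp_apply, MulEquiv.coe_toMonoidHom]
    rw [FreeGroup.map.of, hφdef, FreeGroup.lift_apply_of, hgdef]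
    exact hx i
  have hψ' : ∀ z : FreeGroup (Fin m), mkA (φ (FreeGroup.map Sum.inl z)) = e.symm (mkS z) := by
    intro z
    have := congrArg (fun f : FreeGroup (Fin m) →* G ⧸ A => f z) hψ
    simpa using this
  -- the images of the x i generate G ⧸ A
  have hQgen : Subgroup.closure (Set.range fun i : Fin m => mkA (x i)) = ⊤ := by
    have hsurj2 : Function.Surjective
        ((e.symm : FreeGroup (Fin m) ⧸ Subgroup.normalClosure (S : Set (FreeGroup (Fin m))) ≃* G ⧸ A).toMonoidHom.comp mkS) := by
      exact e.symm.surjective.comp (QuotientGroup.mk'_surjective _)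
    have h1 := closure_range_comp_of _ hsurj2
    have h2 : (Set.range fun i : Fin m => mkA (x i)) =
        (Set.range fun i : Fin m =>
          ((e.symm : FreeGroup (Fin m) ⧸ Subgroup.normalClosure (S : Set (FreeGroup (Fin m))) ≃* G ⧸ A).toMonoidHom.comp mkS) (FreeGroup.of i)) := by
      apply congrArg
      funext i
      simp only [MonoidHom.comp_apply, MulEquiv.coe_toMonoidHom]
      exact hx i
    rw [h2]
    exact h1
  -- φ is surjective
  have htop : Subgroup.closure (Set.range g) = ⊤ := by
    have hA_le : A ≤ Subgroup.closure (Set.range g) := by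
      rw [← hclosa]
      apply Subgroup.closure_mono
      rintro _ ⟨j, rfl⟩
      exact ⟨Sum.inr j, rfl⟩
    have hmap : Subgroup.map mkA (Subgroup.closure (Set.range g)) = ⊤ := by
      rw [MonoidHom.map_closure, eq_top_iff, ← hQgen]
      apply Subgroup.closure_mono
      rintro _ ⟨i, rfl⟩
      exact ⟨g (Sum.inl i), ⟨Sum.inl i, rfl⟩, rfl⟩
    have hcm := Subgroup.comap_map_eq mkA (Subgroup.closure (Set.range g))
    rw [hmap, Subgroup.comap_top] at hcm
    rw [hmkAdef, QuotientGroup.ker_mk'] at hcm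
    rw [sup_eq_left.2 hA_le] at hcm
    exact hcm.symm
  have hsurj : Function.Surjective φ := by
    rw [← MonoidHom.range_eq_top, hφdef, FreeGroup.range_lift_eq_closure]
    exact htop
  -- choose words in the a-generators representing the relators of Q
  have hrel : ∀ s : FreeGroup (Fin m), ∃ v : FreeGroup (Fin k),
      s ∈ S → π v = φ (FreeGroup.map Sum.inl s) := by
    intro s
    by_cases hsS : s ∈ S
    · have h1 : mkA (φ (FreeGroup.map Sum.inl s)) = 1 := by
        have hs1 : mkS s = 1 := by
          rw [hmkSdef]
          exact (QuotientGroup.eq_one_iff _).2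
            (Subgroup.subset_normalClosure (Finset.mem_coe.2 hsS))
        rw [hψ' s, hs1, map_one]
      have h2 : φ (FreeGroup.map Sum.inl s) ∈ A := by
        rw [← QuotientGroup.ker_mk' A]
        exact MonoidHom.mem_ker.2 h1
      have h3 : φ (FreeGroup.map Sum.inl s) ∈ π.range := by
        rw [hπdef, FreeGroup.range_lift_eq_closure, hclosa]
        exact h2
      obtain ⟨v, hv⟩ := h3
      exact ⟨v, fun _ => hv⟩
    · exact ⟨1, fun h => absurd h hsS⟩
  choose vs hvs using hrel
  -- relations of A
  obtain ⟨T, hT1, hT2⟩ := exists_finset_rel a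
  -- the relator set
  set R1 : Finset (FreeGroup (Fin m ⊕ Fin k)) :=
    S.image (fun s => FreeGroup.map Sum.inl s * (FreeGroup.map Sum.inr (vs s))⁻¹) with hR1def
  set R2 : Finset (FreeGroup (Fin m ⊕ Fin k)) :=
    Finset.image (fun p : (Fin m ⊕ Fin k) × Fin k =>
      ⁅FreeGroup.of p.1, FreeGroup.of (Sum.inr p.2)⁆) Finset.univ with hR2def
  set R3 : Finset (FreeGroup (Fin m ⊕ Fin k)) := T.image (FreeGroup.map Sum.inr) with hR3def
  set R : Finset (FreeGroup (Fin m ⊕ Fin k)) := R1 ∪ R2 ∪ R3 with hRdef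
  set N := Subgroup.normalClosure (R : Set (FreeGroup (Fin m ⊕ Fin k))) with hNdef
  have hmemR1 : ∀ s ∈ S,
      FreeGroup.map Sum.inl s * (FreeGroup.map Sum.inr (vs s))⁻¹ ∈ N := by
    intro s hs
    exact Subgroup.subset_normalClosure (Finset.mem_coe.2
      (Finset.mem_union_left _ (Finset.mem_union_left _ (Finset.mem_image_of_mem _ hs))))
  have hmemR2 : ∀ (t : Fin m ⊕ Fin k) (j : Fin k),
      ⁅FreeGroup.of t, FreeGroup.of (Sum.inr j)⁆ ∈ N := by
    intro t j
    refine Subgroup.subset_normalClosure (Finset.mem_coe.2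
      (Finset.mem_union_left _ (Finset.mem_union_right _ ?_)))
    exact Finset.mem_image.2 ⟨(t, j), Finset.mem_univ _, rfl⟩
  have hmemR3 : ∀ u ∈ T, FreeGroup.map Sum.inr u ∈ N := by
    intro u hu
    exact Subgroup.subset_normalClosure (Finset.mem_coe.2
      (Finset.mem_union_right _ (Finset.mem_image_of_mem _ hu)))
  -- N is contained in the kernel of φ
  have hNle : N ≤ φ.ker := by
    rw [hNdef]
    refine Subgroup.normalClosure_le_normal ?_
    intro r hr
    rw [Finset.coe_union, Finset.coe_union] at hr
    simp only [Set.mem_union, Finset.mem_coe] at hr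
    rcases hr with (hr | hr) | hr
    · obtain ⟨s, hsS, rfl⟩ := Finset.mem_image.1 hr
      show _ ∈ φ.ker
      rw [MonoidHom.mem_ker, map_mul, map_inv, hφinr, hvs s hsS, mul_inv_cancel]
    · obtain ⟨⟨t, j⟩, _, rfl⟩ := Finset.mem_image.1 hr
      show _ ∈ φ.ker
      rw [MonoidHom.mem_ker, map_commutatorElement]
      refine commutatorElement_eq_one_iff_commute.2 ?_
      rw [hφdef, FreeGroup.lift_apply_of, FreeGroup.lift_apply_of]
      have := Subgroup.mem_center_iff.1 (hA (haA j)) (g t)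
      show g t * g (Sum.inr j) = g (Sum.inr j) * g t
      rw [hgdef]
      exact this
    · obtain ⟨u, huT, rfl⟩ := Finset.mem_image.1 hr
      show _ ∈ φ.ker
      rw [MonoidHom.mem_ker, hφinr, hπdef]
      exact hT1 u huT
  set q := QuotientGroup.mk' N with hqdef
  set φbar := QuotientGroup.lift N φ (fun w hw => MonoidHom.mem_ker.1 (hNle hw)) with hφbardef
  have hφbar : ∀ w : FreeGroup (Fin m ⊕ Fin k), φbar (q w) = φ w := by
    intro w; rfl
  have hHgen : Subgroup.closure
      (Set.range fun t : Fin m ⊕ Fin k => q (FreeGroup.of t)) = ⊤ :=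
    closure_range_comp_of q (QuotientGroup.mk'_surjective N)
  set ρ := q.comp (FreeGroup.map Sum.inr) with hρdef
  set θ := q.comp (FreeGroup.map Sum.inl) with hθdef
  -- the images of a-generators are central
  have hcentral : ∀ j : Fin k, ∀ h, Commute (q (FreeGroup.of (Sum.inr j))) h := by
    intro j
    refine commute_all_of_gen hHgen ?_
    rintro _ ⟨t, rfl⟩
    have h1 : q ⁅FreeGroup.of t, FreeGroup.of (Sum.inr j)⁆ = 1 :=
      (QuotientGroup.eq_one_iff _).2 (hmemR2 t j)
    rw [map_commutatorElement] at h1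
    exact (commutatorElement_eq_one_iff_commute.mp h1).symm
  set B := Subgroup.closure
    (Set.range fun j : Fin k => q (FreeGroup.of (Sum.inr j))) with hBdef
  have hBcomm : ∀ b ∈ B, ∀ h, Commute b h := by
    intro b hb
    rw [hBdef] at hb
    induction hb using Subgroup.closure_induction with
    | mem y hy => obtain ⟨j, rfl⟩ := hy; exact hcentral j
    | one => exact fun h => Commute.one_left h
    | mul y z _ _ hy hz => exact fun h => (hy h).mul_left (hz h)
    | inv y _ hy => exact fun h => (hy h).inv_left
  haveI hBnormal : B.Normal := by
    constructor
    intro b hb gg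
    have hc : gg * b = b * gg := (hBcomm b hb gg).symm.eq
    rw [show gg * b * gg⁻¹ = b from by rw [hc, mul_inv_cancel_right]]
    exact hb
  have hρrange : ρ.range = B := by
    have h1 : ρ = FreeGroup.lift (fun j : Fin k => q (FreeGroup.of (Sum.inr j))) := by
      apply FreeGroup.ext_hom
      intro j
      simp [hρdef]
    rw [h1, FreeGroup.range_lift_eq_closure, hBdef]
  -- injectivity on the abelian part
  have hBinj : ∀ v : FreeGroup (Fin k), π v = 1 → ρ v = 1 := by
    intro v hv
    have h1 : v ∈ (FreeGroup.lift a).ker := by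
      rw [MonoidHom.mem_ker, ← hπdef]; exact hv
    have h2 := hT2 h1
    have h3 : Subgroup.normalClosure ((T : Set (FreeGroup (Fin k))) ∪
        {w | ∃ i j : Fin k, w = ⁅FreeGroup.of i, FreeGroup.of j⁆}) ≤ ρ.ker := by
      refine Subgroup.normalClosure_le_normal ?_
      rintro u (huT | ⟨i, j, rfl⟩)
      · show u ∈ ρ.ker
        rw [MonoidHom.mem_ker, hρdef, MonoidHom.comp_apply]
        exact (QuotientGroup.eq_one_iff _).2 (hmemR3 u huT)
      · show _ ∈ ρ.ker
        rw [MonoidHom.mem_ker, hρdef, MonoidHom.comp_apply, map_commutatorElement,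
          FreeGroup.map.of, FreeGroup.map.of]
        exact (QuotientGroup.eq_one_iff _).2 (hmemR2 (Sum.inr i) j)
    exact MonoidHom.mem_ker.1 (h3 h2)
  -- θ maps relators of Q into B
  have hθS : ∀ z ∈ Subgroup.normalClosure (S : Set (FreeGroup (Fin m))), θ z ∈ B := by
    haveI : (Subgroup.comap θ B).Normal := hBnormal.comap θ
    intro z hz
    refine Subgroup.normalClosure_le_normal (N := Subgroup.comap θ B) ?_ hz
    intro s hsS
    show θ s ∈ B
    have hq : q (FreeGroup.map Sum.inl s) = q (FreeGroup.map Sum.inr (vs s)) := by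
      have h0 : q (FreeGroup.map Sum.inl s) * (q (FreeGroup.map Sum.inr (vs s)))⁻¹ = 1 := by
        rw [← map_inv, ← map_mul]
        exact (QuotientGroup.eq_one_iff _).2 (hmemR1 s (Finset.mem_coe.1 hsS))
      exact mul_inv_eq_one.1 h0
    show q (FreeGroup.map Sum.inl s) ∈ B
    rw [hq, ← hρrange]
    exact ⟨vs s, rfl⟩
  -- every element of the quotient decomposes as θ z * b
  have hdecomp : ∀ h : FreeGroup (Fin m ⊕ Fin k) ⧸ N,
      ∃ z b, b ∈ B ∧ h = θ z * b := by
    intro h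
    have hh : h ∈ Subgroup.closure
        (Set.range fun t : Fin m ⊕ Fin k => q (FreeGroup.of t)) := by
      rw [hHgen]; trivial
    refine Subgroup.closure_induction
      (p := fun h _ => ∃ z b, b ∈ B ∧ h = θ z * b) ?_ ?_ ?_ ?_ hh
    · rintro _ ⟨t, rfl⟩
      cases t with
      | inl i =>
          refine ⟨FreeGroup.of i, 1, one_mem _, ?_⟩
          rw [mul_one, hθdef, MonoidHom.comp_apply, FreeGroup.map.of]
      | inr j =>
          refine ⟨1, q (FreeGroup.of (Sum.inr j)), Subgroup.subset_closure ⟨j, rfl⟩, ?_⟩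
          rw [map_one, one_mul]
    · exact ⟨1, 1, one_mem _, by rw [map_one, one_mul]⟩
    · rintro h1 h2 _ _ ⟨z1, b1, hb1, rfl⟩ ⟨z2, b2, hb2, rfl⟩
      refine ⟨z1 * z2, b1 * b2, mul_mem hb1 hb2, ?_⟩
      have hc : b1 * θ z2 = θ z2 * b1 := (hBcomm b1 hb1 (θ z2)).eq
      rw [map_mul, show θ z1 * b1 * (θ z2 * b2) = θ z1 * (b1 * θ z2) * b2 by group, hc]
      group
    · rintro h1 _ ⟨z, b, hb, rfl⟩
      refine ⟨z⁻¹, b⁻¹, inv_mem hb, ?_⟩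
      have hc : Commute b (θ z) := hBcomm b hb (θ z)
      rw [map_inv, mul_inv_rev, hc.inv_inv.eq]
  -- the kernel of φ equals N
  have hker_le : φ.ker ≤ N := by
    intro w hw
    have h1 : φ w = 1 := MonoidHom.mem_ker.1 hw
    obtain ⟨z, b, hb, hqw⟩ := hdecomp (q w)
    obtain ⟨v, hv⟩ : ∃ v, ρ v = b := by
      rw [← hρrange] at hb
      exact hb
    have hρπ : ∀ u : FreeGroup (Fin k), φbar (ρ u) = π u := by
      intro u
      show φbar (q (FreeGroup.map Sum.inr u)) = π u
      rw [hφbar, hφinr]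
    have hφb : φbar b ∈ A := by
      rw [← hv, hρπ v, ← hclosa, ← FreeGroup.range_lift_eq_closure, ← hπdef]
      exact ⟨v, rfl⟩
    have hθφ : ∀ z' : FreeGroup (Fin m), φbar (θ z') = φ (FreeGroup.map Sum.inl z') := by
      intro z'
      show φbar (q (FreeGroup.map Sum.inl z')) = _
      rw [hφbar]
    have hφθz : φ (FreeGroup.map Sum.inl z) * φbar b = 1 := by
      have h2 := congrArg φbar hqw
      rw [hφbar, map_mul, hθφ] at h2
      rw [← h2, h1]
    have hmemA : φ (FreeGroup.map Sum.inl z) ∈ A := by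
      rw [show φ (FreeGroup.map Sum.inl z) = (φbar b)⁻¹ from
        eq_inv_of_mul_eq_one_left hφθz]
      exact inv_mem hφb
    have hz1 : mkS z = 1 := by
      have h2 : mkA (φ (FreeGroup.map Sum.inl z)) = 1 := by
        rw [hmkAdef]
        show QuotientGroup.mk _ = 1
        exact (QuotientGroup.eq_one_iff _).2 hmemA
      rw [hψ' z] at h2
      apply e.symm.injective
      rw [h2, map_one]
    have hzS : z ∈ Subgroup.normalClosure (S : Set (FreeGroup (Fin m))) := by
      have : z ∈ mkS.ker := MonoidHom.mem_ker.2 hz1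
      rwa [hmkSdef, QuotientGroup.ker_mk'] at this
    have hqwB : q w ∈ B := by
      rw [hqw]
      exact mul_mem (hθS z hzS) hb
    obtain ⟨v', hv'⟩ : ∃ v', ρ v' = q w := by
      rw [← hρrange] at hqwB
      exact hqwB
    have hπv' : π v' = 1 := by
      rw [← hρπ v', hv', hφbar, h1]
    have hq1 : q w = 1 := by
      rw [← hv']
      exact hBinj v' hπv'
    exact (QuotientGroup.eq_one_iff (N := N) w).1 hq1
  have hker : φ.ker = N := le_antisymm hker_le hNle
  refine isFinitelyPresented_of_fintype R ⟨?_⟩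
  exact (QuotientGroup.quotientKerEquivOfSurjective φ hsurj).symm.trans
    (QuotientGroup.quotientMulEquivOfEq hker)
end
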